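/- arXiv:2210.11120 — 6 statements merged into one kernel-verified Lean document; each statement's English description precedes it below -/
import Mathlib

section
/- Let G be a connected finite simple graph that is not isomorphic to the complete graph K_2, and let e = uv be an edge of G. Then γst(G) − 1 ≤ γst(G − e) ≤ γst(G) + deg(u) + deg(v) − 2, where G − e denotes the graph obtained from G by deleting the edge e. -/
open SimpleGraph

/-- The degree of a vertex, as the cardinality of its neighbor set. -/
noncomputable def sdeg {V : Type*} (G : SimpleGraph V) (v : V) : ℕ :=
  (G.neighborSet v).ncard

/-- `D` is a strong dominating set of `G` if every vertex outside `D` has a neighbor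
in `D` of at least the same degree. -/
def IsStrongDominatingSet {V : Type*} (G : SimpleGraph V) (D : Set V) : Prop :=
  ∀ x ∉ D, ∃ y ∈ D, G.Adj x y ∧ sdeg G x ≤ sdeg G y

/-- The strong domination number: minimum cardinality of a strong dominating set. -/
noncomputable def strongDominationNumber {V : Type*} (G : SimpleGraph V) : ℕ :=
  sInf {n | ∃ D : Set V, IsStrongDominatingSet G D ∧ D.ncard = n}

/-- Subdivision of the edge `uv` of `G`: delete `uv`, add a new vertex `none`
adjacent to `u` and `v`. -/
def subdivide {V : Type*} (G : SimpleGraph V) (u v : V) : SimpleGraph (Option V) :=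
  SimpleGraph.fromRel (fun a b =>
    match a, b with
    | some x, some y => G.Adj x y ∧ ¬(s(x, y) = s(u, v))
    | some x, none => x = u ∨ x = v
    | none, some _ => False
    | none, none => False)

/-- Contraction of the edge `uv` of `G`: the vertex `u` plays the role of the merged
vertex, and `v` is removed. -/
def contractEdge {V : Type*} (G : SimpleGraph V) (u v : V) :
    SimpleGraph {x : V // x ≠ v} :=
  SimpleGraph.fromRel (fun a b =>
    G.Adj a.1 b.1 ∨ (a.1 = u ∧ G.Adj v b.1) ∨ (b.1 = u ∧ G.Adj a.1 v))

/-- The corona product `G1 ∘ G2`: one copy of `G1` together with one copy of `G2`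
for each vertex `i` of `G1`, where `i` is joined to all vertices of its copy. -/
def corona {V1 V2 : Type*} (G1 : SimpleGraph V1) (G2 : SimpleGraph V2) :
    SimpleGraph (V1 ⊕ V1 × V2) :=
  SimpleGraph.fromRel (fun a b =>
    match a, b with
    | .inl a, .inl b => G1.Adj a b
    | .inl a, .inr (i, _) => a = i
    | .inr _, .inl _ => False
    | .inr (i, x), .inr (j, y) => i = j ∧ G2.Adj x y)

/-- The `k`-subdivision `G^{1/k}` of `G`: every edge is replaced by a path of length
`k`, the internal vertices of the path replacing `e` being indexed by `e` and a
position in `Fin (k-1)` (an orientation of `e` is chosen via `Quot.out`). -/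
noncomputable def kSubdivision {V : Type*} (G : SimpleGraph V) (k : ℕ) :
    SimpleGraph (V ⊕ G.edgeSet × Fin (k - 1)) :=
  SimpleGraph.fromRel (fun a b =>
    match a, b with
    | .inl x, .inl y => k ≤ 1 ∧ G.Adj x y
    | .inl x, .inr (e, i) =>
        (x = (Quot.out (e : Sym2 V)).1 ∧ (i : ℕ) = 0) ∨
        (x = (Quot.out (e : Sym2 V)).2 ∧ (i : ℕ) = k - 2)
    | .inr _, .inl _ => False
    | .inr (e, i), .inr (f, j) => e = f ∧ (j : ℕ) = (i : ℕ) + 1)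

set_option linter.unusedSectionVars false
set_option linter.unusedVariables false
section Aux
variable {V : Type*} [Fintype V]

lemma isStrongDominatingSet_univ (G : SimpleGraph V) :
    IsStrongDominatingSet G Set.univ := fun x hx => absurd (Set.mem_univ x) hx

lemma strongDominationNumber_le_ncard {G : SimpleGraph V} {D : Set V}
    (hD : IsStrongDominatingSet G D) : strongDominationNumber G ≤ D.ncard :=
  Nat.sInf_le ⟨D, hD, rfl⟩

lemma exists_min_sds (G : SimpleGraph V) :
    ∃ D : Set V, IsStrongDominatingSet G D ∧ D.ncard = strongDominationNumber G := by
  have h : strongDominationNumber G ∈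
      {n | ∃ D : Set V, IsStrongDominatingSet G D ∧ D.ncard = n} :=
    Nat.sInf_mem ⟨(Set.univ : Set V).ncard, Set.univ, isStrongDominatingSet_univ G, rfl⟩
  exact h

variable {G : SimpleGraph V} {u v : V}

lemma adj_delete_iff {a b : V} :
    (G.deleteEdges {s(u,v)}).Adj a b ↔
      G.Adj a b ∧ ¬(a = u ∧ b = v) ∧ ¬(a = v ∧ b = u) := by
  simp only [SimpleGraph.deleteEdges_adj, Set.mem_singleton_iff, Sym2.eq_iff]
  tauto

lemma nbrSet_delete_of_ne {a : V} (ha : a ≠ u) (ha' : a ≠ v) :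
    (G.deleteEdges {s(u,v)}).neighborSet a = G.neighborSet a := by
  ext b
  simp only [SimpleGraph.mem_neighborSet, adj_delete_iff]
  constructor
  · exact fun h => h.1
  · exact fun h => ⟨h, fun hc => ha hc.1, fun hc => ha' hc.1⟩

lemma nbrSet_delete_left (huv : G.Adj u v) :
    (G.deleteEdges {s(u,v)}).neighborSet u = G.neighborSet u \ {v} := by
  ext b
  have hne : u ≠ v := huv.ne
  simp only [SimpleGraph.mem_neighborSet, adj_delete_iff, Set.mem_diff,
    Set.mem_singleton_iff]
  tauto

lemma nbrSet_delete_right (huv : G.Adj u v) :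
    (G.deleteEdges {s(u,v)}).neighborSet v = G.neighborSet v \ {u} := by
  ext b
  have hne : u ≠ v := huv.ne
  simp only [SimpleGraph.mem_neighborSet, adj_delete_iff, Set.mem_diff,
    Set.mem_singleton_iff]
  tauto

lemma sdeg_delete_of_ne {a : V} (ha : a ≠ u) (ha' : a ≠ v) :
    sdeg (G.deleteEdges {s(u,v)}) a = sdeg G a := by
  unfold sdeg; rw [nbrSet_delete_of_ne ha ha']

lemma sdeg_delete_left (huv : G.Adj u v) :
    sdeg (G.deleteEdges {s(u,v)}) u + 1 = sdeg G u := by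
  unfold sdeg; rw [nbrSet_delete_left huv]
  exact Set.ncard_diff_singleton_add_one huv

lemma sdeg_delete_right (huv : G.Adj u v) :
    sdeg (G.deleteEdges {s(u,v)}) v + 1 = sdeg G v := by
  unfold sdeg; rw [nbrSet_delete_right huv]
  exact Set.ncard_diff_singleton_add_one huv.symm

lemma sdeg_delete_le (a : V) : sdeg (G.deleteEdges {s(u,v)}) a ≤ sdeg G a :=
  Set.ncard_le_ncard (fun b hb => (adj_delete_iff.mp hb).1) (Set.toFinite _)

lemma sds_transfer {x y : V} (hx1 : x ≠ u) (hx2 : x ≠ v) (hy1 : y ≠ u) (hy2 : y ≠ v)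
    (hadj : G.Adj x y) (hdeg : sdeg G x ≤ sdeg G y) :
    (G.deleteEdges {s(u,v)}).Adj x y ∧
      sdeg (G.deleteEdges {s(u,v)}) x ≤ sdeg (G.deleteEdges {s(u,v)}) y := by
  refine ⟨adj_delete_iff.mpr ⟨hadj, fun h => hx1 h.1, fun h => hx2 h.1⟩, ?_⟩
  rw [sdeg_delete_of_ne hx1 hx2, sdeg_delete_of_ne hy1 hy2]; exact hdeg

lemma one_le_sdeg (huv : G.Adj u v) : 1 ≤ sdeg G u := by
  have h : 0 < (G.neighborSet u).ncard :=
    (Set.ncard_pos (Set.toFinite _)).mpr ⟨v, huv⟩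
  exact h

end Aux

section K2
variable {V : Type*} [Fintype V] {G : SimpleGraph V} {u v : V}

lemma nbr_eq_singleton (huv : G.Adj u v) (hu : sdeg G u = 1) :
    G.neighborSet u = {v} := by
  obtain ⟨a, ha⟩ := Set.ncard_eq_one.mp hu
  have hv : v ∈ G.neighborSet u := huv
  rw [ha] at hv ⊢
  rw [Set.mem_singleton_iff] at hv
  rw [hv]

lemma not_both_deg_one (hconn : G.Connected)
    (hK2 : ¬ Nonempty (G ≃g (⊤ : SimpleGraph (Fin 2))))
    (huv : G.Adj u v) : ¬(sdeg G u = 1 ∧ sdeg G v = 1) := by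
  classical
  rintro ⟨hu, hv⟩
  have hne : u ≠ v := huv.ne
  have hNu : G.neighborSet u = {v} := nbr_eq_singleton huv hu
  have hNv : G.neighborSet v = {u} := nbr_eq_singleton huv.symm hv
  have key : ∀ ⦃a b : V⦄, G.Walk a b → (a = u ∨ a = v) → (b = u ∨ b = v) := by
    intro a b p
    induction p with
    | nil => exact id
    | cons h p ih =>
      intro ha
      apply ih
      rcases ha with ha | ha
      · right
        have h2 := h
        rw [ha] at h2
        have h3 : _ ∈ G.neighborSet u := h2
        rwa [hNu, Set.mem_singleton_iff] at h3
      · left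
        have h2 := h
        rw [ha] at h2
        have h3 : _ ∈ G.neighborSet v := h2
        rwa [hNv, Set.mem_singleton_iff] at h3
  have hall : ∀ w : V, w = u ∨ w = v := fun w =>
    key ((hconn.preconnected u w).some) (Or.inl rfl)
  apply hK2
  refine ⟨⟨⟨fun a => if a = u then 0 else 1, fun i => if i = 0 then u else v,
    ?_, ?_⟩, ?_⟩⟩
  · intro a
    by_cases hau : a = u
    · simp [hau]
    · have hav : a = v := (hall a).resolve_left hau
      simp [hav, hne.symm]
  · intro i
    fin_cases i
    · simp
    · simp [hne.symm]
  · intro a b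
    rcases hall a with ha | ha <;> rcases hall b with hb | hb <;>
      simp [ha, hb, hne, hne.symm, huv, huv.symm]

end K2

section Upper
variable {V : Type*} [Fintype V] {G : SimpleGraph V} {u v : V}

lemma upper_caseB (huv : G.Adj u v)
    (h2 : sdeg G u = 1 → 2 ≤ sdeg G v)
    {D : Set V} (hD : IsStrongDominatingSet G D) (hu : u ∉ D) (hv : v ∈ D) :
    ∃ D' : Set V, IsStrongDominatingSet (G.deleteEdges {s(u,v)}) D' ∧
      D'.ncard + 2 ≤ D.ncard + sdeg G u + sdeg G v := by
  have hne : u ≠ v := huv.ne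
  have huNv : u ∈ G.neighborSet v := huv.symm
  have hNv1 : (G.neighborSet v \ {u}).ncard + 1 = sdeg G v :=
    Set.ncard_diff_singleton_add_one huNv
  have h1u : 1 ≤ sdeg G u := one_le_sdeg huv
  have hdelv : sdeg (G.deleteEdges {s(u,v)}) v + 1 = sdeg G v := sdeg_delete_right huv
  by_cases hdu : sdeg G u = 1
  · -- deg u = 1
    have hdv2 : 2 ≤ sdeg G v := h2 hdu
    by_cases hex : ∃ z ∈ G.neighborSet v, z ≠ u ∧ sdeg G z < sdeg G v
    · obtain ⟨z, hzN, hzu, hzlt⟩ := hex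
      have hzv : z ≠ v := (hzN : G.Adj v z).ne'
      refine ⟨insert u (D ∪ (G.neighborSet v \ {u, z})), ?_, ?_⟩
      · intro x hx
        have hxu : x ≠ u := by rintro rfl; exact hx (Set.mem_insert _ _)
        have hxD : x ∉ D := fun h => hx (Set.mem_insert_of_mem _ (Or.inl h))
        have hxv : x ≠ v := by rintro rfl; exact hxD hv
        by_cases hxz : x = z
        · subst hxz
          refine ⟨v, Set.mem_insert_of_mem _ (Or.inl hv), ?_, ?_⟩
          · exact adj_delete_iff.mpr ⟨(hzN : G.Adj v x).symm,
              fun h => hxu h.1, fun h => hxv h.1⟩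
          · rw [sdeg_delete_of_ne hxu hxv]
            linarith
        · have hxN : x ∉ G.neighborSet v := by
            intro h
            exact hx (Set.mem_insert_of_mem _ (Or.inr ⟨h, by
              simp only [Set.mem_insert_iff, Set.mem_singleton_iff]
              tauto⟩))
          obtain ⟨y, hyD, hyadj, hydeg⟩ := hD x hxD
          have hyu : y ≠ u := fun h => hu (h ▸ hyD)
          have hyv : y ≠ v := by rintro rfl; exact hxN hyadj.symm
          obtain ⟨ha, hd⟩ := sds_transfer hxu hxv hyu hyv hyadj hydeg
          exact ⟨y, Set.mem_insert_of_mem _ (Or.inl hyD), ha, hd⟩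
      · -- cardinality
        have e1 : G.neighborSet v \ {u, z} = (G.neighborSet v \ {u}) \ {z} := by
          rw [Set.diff_diff, Set.singleton_union]
        have e2 : ((G.neighborSet v \ {u}) \ {z}).ncard + 1
            = (G.neighborSet v \ {u}).ncard :=
          Set.ncard_diff_singleton_add_one ⟨hzN, hzu⟩
        have e3 := Set.ncard_insert_le u (D ∪ (G.neighborSet v \ {u, z}))
        have e4 := Set.ncard_union_le D (G.neighborSet v \ {u, z})
        rw [e1] at e3 e4 ⊢
        linarith
    · -- all other neighbors of v have degree ≥ deg v
      push_neg at hex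
      have hzex : ∃ z, z ∈ G.neighborSet v \ {u} := by
        rw [← Set.nonempty_def, Set.nonempty_iff_ne_empty]
        intro h
        rw [h, Set.ncard_empty] at hNv1
        linarith
      obtain ⟨z, hzN, hzu⟩ := hzex
      have hzv : z ≠ v := (hzN : G.Adj v z).ne'
      have hzdeg : sdeg G v ≤ sdeg G z := hex z hzN hzu
      refine ⟨insert u ((D \ {v}) ∪ (G.neighborSet v \ {u})), ?_, ?_⟩
      · intro x hx
        have hxu : x ≠ u := by rintro rfl; exact hx (Set.mem_insert _ _)
        by_cases hxv : x = v
        · subst hxv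
          refine ⟨z, Set.mem_insert_of_mem _ (Or.inr ⟨hzN, hzu⟩), ?_, ?_⟩
          · exact adj_delete_iff.mpr ⟨hzN, fun h => hne h.1.symm, fun h => hzu h.2⟩
          · rw [sdeg_delete_of_ne hzu hzv]
            linarith
        · have hxN : x ∉ G.neighborSet v := fun h =>
            hx (Set.mem_insert_of_mem _ (Or.inr ⟨h, hxu⟩))
          have hxD : x ∉ D := fun h =>
            hx (Set.mem_insert_of_mem _ (Or.inl ⟨h, hxv⟩))
          obtain ⟨y, hyD, hyadj, hydeg⟩ := hD x hxD
          have hyu : y ≠ u := fun h => hu (h ▸ hyD)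
          have hyv : y ≠ v := by rintro rfl; exact hxN hyadj.symm
          obtain ⟨ha, hd⟩ := sds_transfer hxu hxv hyu hyv hyadj hydeg
          exact ⟨y, Set.mem_insert_of_mem _ (Or.inl ⟨hyD, hyv⟩), ha, hd⟩
      · have e2 : (D \ {v}).ncard + 1 = D.ncard :=
          Set.ncard_diff_singleton_add_one hv
        have e3 := Set.ncard_insert_le u ((D \ {v}) ∪ (G.neighborSet v \ {u}))
        have e4 := Set.ncard_union_le (D \ {v}) (G.neighborSet v \ {u})
        linarith
  · -- deg u ≥ 2
    have hdu2 : 2 ≤ sdeg G u := lt_of_le_of_ne h1u (Ne.symm hdu)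
    refine ⟨insert u (D ∪ (G.neighborSet v \ {u})), ?_, ?_⟩
    · intro x hx
      have hxu : x ≠ u := by rintro rfl; exact hx (Set.mem_insert _ _)
      have hxD : x ∉ D := fun h => hx (Set.mem_insert_of_mem _ (Or.inl h))
      have hxv : x ≠ v := by rintro rfl; exact hxD hv
      have hxN : x ∉ G.neighborSet v := fun h =>
        hx (Set.mem_insert_of_mem _ (Or.inr ⟨h, hxu⟩))
      obtain ⟨y, hyD, hyadj, hydeg⟩ := hD x hxD
      have hyu : y ≠ u := fun h => hu (h ▸ hyD)
      have hyv : y ≠ v := by rintro rfl; exact hxN hyadj.symm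
      obtain ⟨ha, hd⟩ := sds_transfer hxu hxv hyu hyv hyadj hydeg
      exact ⟨y, Set.mem_insert_of_mem _ (Or.inl hyD), ha, hd⟩
    · have e3 := Set.ncard_insert_le u (D ∪ (G.neighborSet v \ {u}))
      have e4 := Set.ncard_union_le D (G.neighborSet v \ {u})
      linarith

end Upper

/-- Edge deletion: for a connected graph `G ≠ K₂` and an edge `uv`,
`γst(G) - 1 ≤ γst(G - e) ≤ γst(G) + deg u + deg v - 2`. -/
theorem strongDominationNumber_deleteEdge_bounds {V : Type*} [Fintype V]
    (G : SimpleGraph V) (hconn : G.Connected)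
    (hK2 : ¬ Nonempty (G ≃g (⊤ : SimpleGraph (Fin 2))))
    (u v : V) (huv : G.Adj u v) :
    (strongDominationNumber G : ℤ) - 1 ≤
        strongDominationNumber (G.deleteEdges {s(u, v)}) ∧
    (strongDominationNumber (G.deleteEdges {s(u, v)}) : ℤ) ≤
        strongDominationNumber G + sdeg G u + sdeg G v - 2 := by
  classical
  have hne : u ≠ v := huv.ne
  have h1u : 1 ≤ sdeg G u := one_le_sdeg huv
  have h1v : 1 ≤ sdeg G v := one_le_sdeg huv.symm
  have hnot := not_both_deg_one hconn hK2 huv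
  constructor
  · -- lower bound
    obtain ⟨D', hD', hcard'⟩ := exists_min_sds (G.deleteEdges {s(u, v)})
    have key : ∀ w : V, (w = u ∨ w = v) →
        (w = u → sdeg G v ≤ sdeg G u) → (w = v → sdeg G u ≤ sdeg G v) →
        IsStrongDominatingSet G (insert w D') := by
      intro w hw hw1 hw2 x hx
      have hxw : x ≠ w := by rintro rfl; exact hx (Set.mem_insert _ _)
      have hxD : x ∉ D' := fun h => hx (Set.mem_insert_of_mem _ h)
      by_cases hxe : (x = u ∧ w = v) ∨ (x = v ∧ w = u)
      · rcases hxe with ⟨hx1, hw1'⟩ | ⟨hx1, hw1'⟩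
        · exact ⟨w, Set.mem_insert _ _, by rw [hx1, hw1']; exact huv,
            by rw [hx1, hw1']; exact hw2 hw1'⟩
        · exact ⟨w, Set.mem_insert _ _, by rw [hx1, hw1']; exact huv.symm,
            by rw [hx1, hw1']; exact hw1 hw1'⟩
      · push_neg at hxe
        have hxu : x ≠ u := by
          rintro rfl
          rcases hw with rfl | rfl
          · exact hxw rfl
          · exact hxe.1 rfl rfl
        have hxv : x ≠ v := by
          rintro rfl
          rcases hw with rfl | rfl
          · exact hxe.2 rfl rfl
          · exact hxw rfl
        obtain ⟨y, hyD, hyadj, hydeg⟩ := hD' x hxD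
        refine ⟨y, Set.mem_insert_of_mem _ hyD, (adj_delete_iff.mp hyadj).1, ?_⟩
        have hy := sdeg_delete_le (G := G) (u := u) (v := v) y
        rw [sdeg_delete_of_ne hxu hxv] at hydeg
        linarith
    have hsd : ∃ w, IsStrongDominatingSet G (insert w D') := by
      by_cases hw : sdeg G v ≤ sdeg G u
      · exact ⟨u, key u (Or.inl rfl) (fun _ => hw) (fun h => absurd h hne)⟩
      · exact ⟨v, key v (Or.inr rfl) (fun h => absurd h hne.symm)
          (fun _ => le_of_not_ge hw)⟩
    obtain ⟨w, hsd⟩ := hsd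
    have hnat : strongDominationNumber G ≤
        strongDominationNumber (G.deleteEdges {s(u, v)}) + 1 := by
      have := le_trans (strongDominationNumber_le_ncard hsd) (Set.ncard_insert_le w D')
      rw [hcard'] at this
      exact this
    have h' : (strongDominationNumber G : ℤ) ≤
        (strongDominationNumber (G.deleteEdges {s(u, v)}) : ℤ) + 1 := by
      exact_mod_cast hnat
    linarith
  · -- upper bound
    obtain ⟨D, hD, hcard⟩ := exists_min_sds G
    suffices h : ∃ D' : Set V, IsStrongDominatingSet (G.deleteEdges {s(u, v)}) D' ∧
        D'.ncard + 2 ≤ D.ncard + sdeg G u + sdeg G v by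
      obtain ⟨D', hsd, hc⟩ := h
      have hle := strongDominationNumber_le_ncard hsd
      have hnat : strongDominationNumber (G.deleteEdges {s(u, v)}) + 2 ≤
          strongDominationNumber G + sdeg G u + sdeg G v := by
        rw [← hcard]; linarith
      have h2 : (strongDominationNumber (G.deleteEdges {s(u, v)}) : ℤ) + 2 ≤
          (strongDominationNumber G : ℤ) + sdeg G u + sdeg G v := by
        exact_mod_cast hnat
      linarith
    by_cases hu : u ∈ D <;> by_cases hvD : v ∈ D
    · -- case A : both in D
      have huNv : u ∈ G.neighborSet v := huv.symm
      have hvNu : v ∈ G.neighborSet u := huv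
      have eU : (G.neighborSet u \ {v}).ncard + 1 = sdeg G u :=
        Set.ncard_diff_singleton_add_one hvNu
      have eV : (G.neighborSet v \ {u}).ncard + 1 = sdeg G v :=
        Set.ncard_diff_singleton_add_one huNv
      refine ⟨D ∪ (G.neighborSet u \ {v}) ∪ (G.neighborSet v \ {u}), ?_, ?_⟩
      · intro x hx
        have hxD : x ∉ D := fun h =>
          hx (Set.mem_union_left _ (Set.mem_union_left _ h))
        have hxu : x ≠ u := by rintro rfl; exact hxD hu
        have hxv : x ≠ v := by rintro rfl; exact hxD hvD
        have hxNu : x ∉ G.neighborSet u := fun h =>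
          hx (Set.mem_union_left _ (Set.mem_union_right _ ⟨h, hxv⟩))
        have hxNv : x ∉ G.neighborSet v := fun h =>
          hx (Set.mem_union_right _ ⟨h, hxu⟩)
        obtain ⟨y, hyD, hyadj, hydeg⟩ := hD x hxD
        have hyu : y ≠ u := by rintro rfl; exact hxNu hyadj.symm
        have hyv : y ≠ v := by rintro rfl; exact hxNv hyadj.symm
        obtain ⟨ha, hd⟩ := sds_transfer hxu hxv hyu hyv hyadj hydeg
        exact ⟨y, Set.mem_union_left _ (Set.mem_union_left _ hyD), ha, hd⟩
      · have e1 := Set.ncard_union_le (D ∪ (G.neighborSet u \ {v}))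
          (G.neighborSet v \ {u})
        have e2 := Set.ncard_union_le D (G.neighborSet u \ {v})
        linarith
    · -- case B' : u ∈ D, v ∉ D
      have h2' : sdeg G v = 1 → 2 ≤ sdeg G u := fun h =>
        lt_of_le_of_ne h1u (fun hh => hnot ⟨hh.symm, h⟩)
      obtain ⟨D', hsd, hc⟩ := upper_caseB (u := v) (v := u) huv.symm h2' hD hvD hu
      have hsw : s(v, u) = s(u, v) := Sym2.eq_swap
      rw [hsw] at hsd
      exact ⟨D', hsd, by linarith⟩
    · -- case B : u ∉ D, v ∈ D
      have h2' : sdeg G u = 1 → 2 ≤ sdeg G v := fun h =>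
        lt_of_le_of_ne h1v (fun hh => hnot ⟨h, hh.symm⟩)
      obtain ⟨D', hsd, hc⟩ := upper_caseB huv h2' hD hu hvD
      exact ⟨D', hsd, by linarith⟩
    · -- case C : neither in D
      obtain ⟨y, hyD, hyadj, _⟩ := hD u hu
      have hyv : y ≠ v := fun h => hvD (h ▸ hyD)
      have h2u : 2 ≤ sdeg G u := by
        have hsub : ({v, y} : Set V) ⊆ G.neighborSet u := by
          rintro a (rfl | rfl)
          · exact huv
          · exact hyadj
        have hle := Set.ncard_le_ncard hsub (Set.toFinite _)
        rwa [Set.ncard_pair (fun h => hyv h.symm)] at hle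
      obtain ⟨z, hzD, hzadj, _⟩ := hD v hvD
      have hzu : z ≠ u := fun h => hu (h ▸ hzD)
      have h2v : 2 ≤ sdeg G v := by
        have hsub : ({u, z} : Set V) ⊆ G.neighborSet v := by
          rintro a (rfl | rfl)
          · exact huv.symm
          · exact hzadj
        have hle := Set.ncard_le_ncard hsub (Set.toFinite _)
        rwa [Set.ncard_pair (fun h => hzu h.symm)] at hle
      refine ⟨insert u (insert v D), ?_, ?_⟩
      · intro x hx
        have hxu : x ≠ u := by rintro rfl; exact hx (Set.mem_insert _ _)
        have hxv : x ≠ v := by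
          rintro rfl; exact hx (Set.mem_insert_of_mem _ (Set.mem_insert _ _))
        have hxD : x ∉ D := fun h =>
          hx (Set.mem_insert_of_mem _ (Set.mem_insert_of_mem _ h))
        obtain ⟨y', hyD', hyadj', hydeg'⟩ := hD x hxD
        have hyu' : y' ≠ u := fun h => hu (h ▸ hyD')
        have hyv' : y' ≠ v := fun h => hvD (h ▸ hyD')
        obtain ⟨ha, hd⟩ := sds_transfer hxu hxv hyu' hyv' hyadj' hydeg'
        exact ⟨y', Set.mem_insert_of_mem _ (Set.mem_insert_of_mem _ hyD'), ha, hd⟩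
      · have e1 := Set.ncard_insert_le u (insert v D)
        have e2 := Set.ncard_insert_le v D
        linarith
end

section
/- For every n ≥ 1, the strong domination number of the path graph P_n on n vertices equals ⌈n/3⌉, i.e., γst(P_n) = ⌈n/3⌉. -/
open SimpleGraph

lemma aux_ncard_val_eq (n m : ℕ) : ({w : Fin n | w.val = m}).ncard ≤ 1 := by
  rw [Set.ncard_le_one_iff]
  intro a b ha hb
  exact Fin.ext (ha.trans hb.symm)

lemma path_sdeg_le_two {n : ℕ} (v : Fin n) : sdeg (pathGraph n) v ≤ 2 := by
  have h : (pathGraph n).neighborSet v ⊆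
      {w : Fin n | w.val = v.val - 1} ∪ {w : Fin n | w.val = v.val + 1} := by
    intro w hw
    rw [SimpleGraph.mem_neighborSet, pathGraph_adj] at hw
    simp only [Set.mem_union, Set.mem_setOf_eq]
    omega
  calc sdeg (pathGraph n) v ≤ _ := Set.ncard_le_ncard h (Set.toFinite _)
    _ ≤ _ + _ := Set.ncard_union_le _ _
    _ ≤ 2 := by
        have h1 := aux_ncard_val_eq n (v.val - 1)
        have h2 := aux_ncard_val_eq n (v.val + 1)
        omega

lemma path_two_le_sdeg {n : ℕ} (v : Fin n) (h0 : 0 < v.val) (h1 : v.val + 1 < n) :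
    2 ≤ sdeg (pathGraph n) v := by
  have hsub : ({⟨v.val - 1, by omega⟩, ⟨v.val + 1, by omega⟩} : Set (Fin n)) ⊆
      (pathGraph n).neighborSet v := by
    intro w hw
    rw [SimpleGraph.mem_neighborSet, pathGraph_adj]
    rcases hw with rfl | rfl
    · right; show v.val - 1 + 1 = v.val; omega
    · left; rfl
  have hne : (⟨v.val - 1, by omega⟩ : Fin n) ≠ ⟨v.val + 1, by omega⟩ := by
    intro h
    rw [Fin.mk.injEq] at h
    omega
  have := Set.ncard_le_ncard hsub (Set.toFinite _)
  rwa [Set.ncard_pair hne] at this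

lemma path_one_le_sdeg {n : ℕ} (hn : 2 ≤ n) (v : Fin n) : 1 ≤ sdeg (pathGraph n) v := by
  refine (Set.ncard_pos (Set.toFinite _)).mpr ?_
  have hv := v.isLt
  by_cases h : v.val + 1 < n
  · refine ⟨⟨v.val + 1, h⟩, ?_⟩
    rw [SimpleGraph.mem_neighborSet, pathGraph_adj]
    left; simp
  · refine ⟨⟨v.val - 1, by omega⟩, ?_⟩
    rw [SimpleGraph.mem_neighborSet, pathGraph_adj]
    right; simp; omega

lemma path_sdeg_le_one {n : ℕ} (v : Fin n) (h : v.val = 0 ∨ v.val + 1 = n) :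
    sdeg (pathGraph n) v ≤ 1 := by
  rcases h with h | h
  · refine le_trans (Set.ncard_le_ncard ?_ (Set.toFinite _)) (aux_ncard_val_eq n 1)
    intro w hw
    rw [SimpleGraph.mem_neighborSet, pathGraph_adj] at hw
    have := w.isLt
    simp only [Set.mem_setOf_eq]
    omega
  · refine le_trans (Set.ncard_le_ncard ?_ (Set.toFinite _)) (aux_ncard_val_eq n (n - 2))
    intro w hw
    rw [SimpleGraph.mem_neighborSet, pathGraph_adj] at hw
    have := w.isLt
    simp only [Set.mem_setOf_eq]
    omega

lemma path_lower {n : ℕ} {D : Set (Fin n)} (hD : IsStrongDominatingSet (pathGraph n) D) :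
    n ≤ 3 * D.ncard := by
  classical
  set T := D.toFinite.toFinset with hT
  set N : Fin n → Finset (Fin n) :=
    fun d => Finset.univ.filter (fun x => x = d ∨ (pathGraph n).Adj x d) with hNdef
  have hcover : (Finset.univ : Finset (Fin n)) ⊆ T.biUnion N := by
    intro x _
    rw [Finset.mem_biUnion]
    by_cases hx : x ∈ D
    · exact ⟨x, (D.toFinite.mem_toFinset).mpr hx, by simp [hNdef]⟩
    · obtain ⟨y, hyD, hadj, _⟩ := hD x hx
      exact ⟨y, (D.toFinite.mem_toFinset).mpr hyD, by simp [hNdef, hadj]⟩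
  have hN : ∀ d, (N d).card ≤ 3 := by
    intro d
    have h3 : ({d.val - 1, d.val, d.val + 1} : Finset ℕ).card ≤ 3 := by
      have hc2 : ({d.val, d.val + 1} : Finset ℕ).card ≤ 2 :=
        le_trans (Finset.card_insert_le _ _) (by simp)
      exact le_trans (Finset.card_insert_le _ _) (by omega)
    refine le_trans (Finset.card_le_card_of_injOn Fin.val ?_ ?_) h3
    · intro x hx
      simp only [hNdef, Finset.mem_coe, Finset.mem_filter] at hx
      rcases hx.2 with rfl | hadj
      · simp
      · rw [pathGraph_adj] at hadj
        simp only [Finset.mem_coe, Finset.mem_insert, Finset.mem_singleton]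
        omega
    · intro a _ b _ hab
      exact Fin.ext hab
  have h1 : n ≤ (T.biUnion N).card := by
    have := Finset.card_le_card hcover
    simpa using this
  have h2 : (T.biUnion N).card ≤ ∑ d ∈ T, (N d).card := Finset.card_biUnion_le
  have h3 : ∑ d ∈ T, (N d).card ≤ ∑ _d ∈ T, 3 := Finset.sum_le_sum (fun d _ => hN d)
  have h4 : ∑ _d ∈ T, (3:ℕ) = 3 * T.card := by
    rw [Finset.sum_const, smul_eq_mul, mul_comm]
  have h5 : T.card = D.ncard := (Set.ncard_eq_toFinset_card _ _).symm
  omega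

lemma path_upper {n : ℕ} (hn : 1 ≤ n) :
    ∃ D : Set (Fin n), IsStrongDominatingSet (pathGraph n) D ∧ D.ncard = (n + 2) / 3 := by
  classical
  have hk : 0 < (n + 2) / 3 := by omega
  set f : Fin ((n + 2) / 3) → Fin n := fun i =>
    if h : 3 * i.val + 2 < n then ⟨3 * i.val + 1, by omega⟩ else ⟨n - 2, by omega⟩ with hf
  have hfval : ∀ i, (f i).val = if 3 * i.val + 2 < n then 3 * i.val + 1 else n - 2 := by
    intro i
    simp only [hf]
    split_ifs <;> rfl
  have hfval2 : ∀ (m : ℕ) (hm : m < (n + 2) / 3),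
      (f ⟨m, hm⟩).val = if 3 * m + 2 < n then 3 * m + 1 else n - 2 :=
    fun m hm => hfval ⟨m, hm⟩
  have hinj : Function.Injective f := by
    intro i j hij
    have h := congrArg Fin.val hij
    rw [hfval, hfval] at h
    have hi := i.isLt
    have hj := j.isLt
    apply Fin.ext
    split_ifs at h <;> omega
  refine ⟨Set.range f, ?_, ?_⟩
  · intro x hx
    have hxlt := x.isLt
    have keyv : ∀ (m : ℕ) (hm : m < (n + 2) / 3),
        ¬((if 3 * m + 2 < n then 3 * m + 1 else n - 2) = x.val) :=
      fun m hm h => hx ⟨⟨m, hm⟩, Fin.ext ((hfval2 m hm).trans h)⟩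
    by_cases hc1 : x.val % 3 = 1
    · by_cases h : x.val + 1 < n
      · exact absurd (by rw [if_pos (by omega)]; omega) (keyv (x.val / 3) (by omega))
      · by_cases h2 : n = 2
        · refine ⟨f ⟨0, hk⟩, Set.mem_range_self _, ?_, ?_⟩
          · rw [pathGraph_adj, hfval2, if_neg (by omega)]
            right; omega
          · exact le_trans (path_sdeg_le_one x (by omega))
              (path_one_le_sdeg (by omega) _)
        · refine ⟨f ⟨(n + 2) / 3 - 1, by omega⟩, Set.mem_range_self _, ?_, ?_⟩
          · rw [pathGraph_adj, hfval2, if_neg (by omega)]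
            right; omega
          · refine le_trans (path_sdeg_le_two x) (path_two_le_sdeg _ ?_ ?_) <;>
              rw [hfval2, if_neg (by omega)] <;> omega
    · by_cases hc2 : x.val % 3 = 2
      · refine ⟨f ⟨(x.val - 2) / 3, by omega⟩, Set.mem_range_self _, ?_, ?_⟩
        · rw [pathGraph_adj, hfval2, if_pos (by omega)]
          right; omega
        · refine le_trans (path_sdeg_le_two x) (path_two_le_sdeg _ ?_ ?_) <;>
            rw [hfval2, if_pos (by omega)] <;> omega
      · -- x.val % 3 = 0
        by_cases h : x.val + 2 < n
        · refine ⟨f ⟨x.val / 3, by omega⟩, Set.mem_range_self _, ?_, ?_⟩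
          · rw [pathGraph_adj, hfval2, if_pos (by omega)]
            left; omega
          · refine le_trans (path_sdeg_le_two x) (path_two_le_sdeg _ ?_ ?_) <;>
              rw [hfval2, if_pos (by omega)] <;> omega
        · by_cases he : x.val + 2 = n
          · exact absurd (by rw [if_neg (by omega)]; omega)
              (keyv ((n + 2) / 3 - 1) (by omega))
          · by_cases h1 : n = 1
            · exact absurd (by rw [if_neg (by omega)]; omega) (keyv 0 hk)
            · refine ⟨f ⟨(n + 2) / 3 - 1, by omega⟩, Set.mem_range_self _, ?_, ?_⟩
              · rw [pathGraph_adj, hfval2, if_neg (by omega)]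
                right; omega
              · refine le_trans (path_sdeg_le_two x) (path_two_le_sdeg _ ?_ ?_) <;>
                  rw [hfval2, if_neg (by omega)] <;> omega
  · rw [← Set.image_univ, Set.ncard_image_of_injective _ hinj, Set.ncard_univ,
      Nat.card_eq_fintype_card, Fintype.card_fin]

/-- `γst(P_n) = ⌈n/3⌉` for all `n ≥ 1`. -/
theorem strongDominationNumber_pathGraph (n : ℕ) (hn : 1 ≤ n) :
    strongDominationNumber (SimpleGraph.pathGraph n) = (n + 2) / 3 := by
  obtain ⟨D, hD, hcard⟩ := path_upper hn
  apply le_antisymm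
  · exact Nat.sInf_le ⟨D, hD, hcard⟩
  · refine le_csInf ⟨(n + 2) / 3, D, hD, hcard⟩ ?_
    rintro m ⟨E, hE, rfl⟩
    have := path_lower hE
    omega
end

section
/- Let n ≥ 3 with n ≢ 0 (mod 3), and let e be any edge of the cycle graph C_n. Then γst(C_n − e) = γst((C_n)_e), i.e., the strong domination numbers of the graph obtained by deleting e and of the graph obtained by subdividing e are equal. -/
open SimpleGraph
open Fin.NatCast
open Fin.CommRing

/- ## auxiliary lemmas -/


lemma sdn_eq {V : Type*} (G : SimpleGraph V) (γ : ℕ)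
    (hlb : ∀ D : Set V, IsStrongDominatingSet G D → γ ≤ D.ncard)
    (D0 : Set V) (hD0 : IsStrongDominatingSet G D0) (hle : D0.ncard ≤ γ) :
    strongDominationNumber G = γ := by
  have hmem : D0.ncard ∈ {m | ∃ D : Set V, IsStrongDominatingSet G D ∧ D.ncard = m} :=
    ⟨D0, hD0, rfl⟩
  apply le_antisymm
  · exact le_trans (Nat.sInf_le hmem) hle
  · exact le_csInf ⟨_, hmem⟩ (by rintro m ⟨D, h1, rfl⟩; exact hlb D h1)

lemma card_le_of_dom {V : Type*} [Fintype V] (G : SimpleGraph V) (D : Set V)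
    (hdom : ∀ x ∉ D, ∃ y ∈ D, G.Adj x y)
    (hdeg : ∀ y, sdeg G y ≤ 2) :
    Fintype.card V ≤ 3 * D.ncard := by
  classical
  have hF : D.Finite := Set.toFinite D
  set T := hF.toFinset with hT
  have choose : ∀ x : V, ∃ y, y ∈ D ∧ (x = y ∨ G.Adj x y) := by
    intro x
    by_cases h : x ∈ D
    · exact ⟨x, h, Or.inl rfl⟩
    · obtain ⟨y, hy, hadj⟩ := hdom x h
      exact ⟨y, hy, Or.inr hadj⟩
  set f : V → V := fun x => (choose x).choose with hf
  have hf1 : ∀ x, f x ∈ T := fun x => hF.mem_toFinset.mpr (choose x).choose_spec.1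
  have hf2 : ∀ x, x = f x ∨ G.Adj x (f x) := fun x => (choose x).choose_spec.2
  have hcard : Finset.univ.card = ∑ y ∈ T, (Finset.univ.filter fun x => f x = y).card :=
    Finset.card_eq_sum_card_fiberwise (fun x _ => hf1 x)
  have hfib : ∀ y ∈ T, (Finset.univ.filter fun x => f x = y).card ≤ 3 := by
    intro y _
    have hsub : (Finset.univ.filter fun x => f x = y) ⊆ insert y (G.neighborFinset y) := by
      intro x hx
      simp only [Finset.mem_filter] at hx
      rcases hf2 x with h | h
      · rw [Finset.mem_insert]; left; rw [h, hx.2]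
      · rw [Finset.mem_insert, mem_neighborFinset]
        right; rw [← hx.2]; exact h.symm
    calc (Finset.univ.filter fun x => f x = y).card ≤ (insert y (G.neighborFinset y)).card :=
          Finset.card_le_card hsub
      _ ≤ (G.neighborFinset y).card + 1 := Finset.card_insert_le _ _
      _ ≤ 3 := by
          have : (G.neighborFinset y).card = sdeg G y := by
            rw [sdeg, neighborFinset_def, Set.ncard_eq_toFinset_card']
          have h2 := hdeg y
          omega
  calc Fintype.card V = Finset.univ.card := rfl
    _ = ∑ y ∈ T, (Finset.univ.filter fun x => f x = y).card := hcard
    _ ≤ ∑ _y ∈ T, 3 := Finset.sum_le_sum hfib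
    _ = 3 * D.ncard := by
        rw [Finset.sum_const, smul_eq_mul, mul_comm, Set.ncard_eq_toFinset_card D hF]

/- ## Fin helpers -/

section FinHelp
variable {n : ℕ} [NeZero n]

lemma fin_cast_eq {a b : ℕ} : (a : Fin n) = (b : Fin n) ↔ a % n = b % n := by
  rw [Fin.ext_iff, Fin.val_natCast, Fin.val_natCast]

lemma fin_cast_inj {a b : ℕ} (ha : a < n) (hb : b < n) : (a : Fin n) = (b : Fin n) ↔ a = b := by
  rw [fin_cast_eq, Nat.mod_eq_of_lt ha, Nat.mod_eq_of_lt hb]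

lemma fin_cast_mod (a : ℕ) : ((a % n : ℕ) : Fin n) = (a : Fin n) := by
  rw [Fin.ext_iff, Fin.val_natCast, Fin.val_natCast, Nat.mod_mod_of_dvd a dvd_rfl]

lemma fin_add_cast_inj {u : Fin n} {a b : ℕ} (ha : a < n) (hb : b < n) :
    u + (a : Fin n) = u + (b : Fin n) ↔ a = b := by
  rw [add_right_inj, fin_cast_inj ha hb]

lemma fin_add_cast_eq' {u : Fin n} {a b : ℕ} (ha : a ≤ n) (hb : b ≤ n)
    (ha1 : 1 ≤ a) (hb1 : 1 ≤ b) :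
    u + (a : Fin n) = u + (b : Fin n) ↔ a = b := by
  rw [add_right_inj, fin_cast_eq]
  constructor
  · intro h
    rcases eq_or_lt_of_le ha with h3 | ha2 <;> rcases eq_or_lt_of_le hb with h4 | hb2
    · omega
    · subst h3; rw [Nat.mod_self, Nat.mod_eq_of_lt hb2] at h; omega
    · subst h4; rw [Nat.mod_self, Nat.mod_eq_of_lt ha2] at h; omega
    · rw [Nat.mod_eq_of_lt ha2, Nat.mod_eq_of_lt hb2] at h; omega
  · rintro rfl; rfl

lemma fin_one_cast : (1 : Fin n) = ((1:ℕ) : Fin n) := by push_cast; rfl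

lemma cyc_adj (hn : 3 ≤ n) {x y : Fin n} :
    (cycleGraph n).Adj x y ↔ x = y + 1 ∨ y = x + 1 := by
  rw [cycleGraph_adj']
  have h1 : ∀ a b : Fin n, (a - b).val = 1 ↔ a = b + 1 := by
    intro a b
    rw [show (1:ℕ) = ((1:ℕ):Fin n).val by
        rw [Fin.val_natCast, Nat.mod_eq_of_lt (by omega)],
      ← Fin.ext_iff, ← fin_one_cast, sub_eq_iff_eq_add, add_comm]
  rw [h1, h1]

lemma fin_add_one_cast (u : Fin n) (a : ℕ) :
    u + (a : Fin n) + 1 = u + ((a + 1 : ℕ) : Fin n) := by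
  rw [fin_one_cast, Nat.cast_add, add_assoc]

lemma sym2_eq_iff (hn : 3 ≤ n) {x u : Fin n} : s(x, x + 1) = s(u, u + 1) ↔ x = u := by
  rw [Sym2.eq_iff]
  constructor
  · rintro (⟨h, -⟩ | ⟨h1, h2⟩)
    · exact h
    · exfalso
      rw [h1] at h2
      have h3 : u + ((2:ℕ) : Fin n) = u + ((0:ℕ) : Fin n) := by
        have h4 : ((2:ℕ):Fin n) = 1 + 1 := by push_cast; ring
        rw [h4, Nat.cast_zero, add_zero, ← add_assoc]; exact h2
      rw [fin_add_cast_inj (by omega) (by omega)] at h3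
      omega
  · rintro rfl; exact Or.inl ⟨rfl, rfl⟩

lemma fin_sub_add (x : Fin n) : x - 1 + 1 = x := by
  rw [sub_add_cancel]

lemma fin_sub_ne_add (hn : 3 ≤ n) (x : Fin n) : x - 1 ≠ x + 1 := by
  intro h
  have h2 : x + ((2:ℕ) : Fin n) = x + ((0:ℕ) : Fin n) := by
    have h4 : ((2:ℕ):Fin n) = 1 + 1 := by push_cast; ring
    rw [h4, Nat.cast_zero, add_zero, ← add_assoc]
    nth_rewrite 2 [← fin_sub_add x]
    rw [h]
  rw [fin_add_cast_inj (by omega) (by omega)] at h2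
  omega

end FinHelp

/- ## the path graph C_n - e -/

section PathPart
variable {n : ℕ} [NeZero n] (u : Fin n)

/-- parameterization of the path: `P 0 = u + 1`, ..., `P (n-1) = u`. -/
private def P (i : ℕ) : Fin n := u + ((i + 1 : ℕ) : Fin n)

lemma G1_adj (hn : 3 ≤ n) {x y : Fin n} :
    ((cycleGraph n).deleteEdges {s(u, u+1)}).Adj x y ↔ (x = y + 1 ∧ y ≠ u) ∨ (y = x + 1 ∧ x ≠ u) := by
  rw [deleteEdges_adj, cyc_adj hn, Set.mem_singleton_iff]
  constructor
  · rintro ⟨h1 | h1, h2⟩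
    · left
      refine ⟨h1, fun hy => h2 ?_⟩
      subst h1; subst hy
      rw [Sym2.eq_swap]
    · right
      refine ⟨h1, fun hx => h2 ?_⟩
      subst h1; subst hx; rfl
  · rintro (⟨h1, h2⟩ | ⟨h1, h2⟩)
    · refine ⟨Or.inl h1, fun hs => h2 ?_⟩
      subst h1
      rw [Sym2.eq_swap, sym2_eq_iff hn] at hs
      exact hs
    · refine ⟨Or.inr h1, fun hs => h2 ?_⟩
      subst h1
      rw [sym2_eq_iff hn] at hs
      exact hs

lemma P_succ (i : ℕ) : P u i + 1 = P u (i + 1) := by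
  rw [P, P, fin_add_one_cast]

lemma P_eq_u {i : ℕ} (hi : i < n) : P u i = u ↔ i = n - 1 := by
  rw [P]
  nth_rewrite 2 [show u = u + ((n:ℕ) : Fin n) by rw [Fin.natCast_self, add_zero]]
  rw [fin_add_cast_eq' (by omega) (le_refl n) (by omega) (by omega)]
  omega

lemma P_inj {i j : ℕ} (hi : i < n) (hj : j < n) : P u i = P u j ↔ i = j := by
  rw [P, P, fin_add_cast_eq' (by omega) (by omega) (by omega) (by omega)]
  omega

lemma P_adj (hn : 3 ≤ n) {i : ℕ} (hi : i + 1 ≤ n - 1) : ((cycleGraph n).deleteEdges {s(u, u+1)}).Adj (P u i) (P u (i + 1)) := by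
  rw [G1_adj u hn]
  right
  refine ⟨(P_succ u i).symm, fun h => ?_⟩
  rw [P_eq_u u (by omega : i < n)] at h
  omega

lemma G1_nbr_subset (hn : 3 ≤ n) (x : Fin n) : ((cycleGraph n).deleteEdges {s(u, u+1)}).neighborSet x ⊆ {x - 1, x + 1} := by
  intro y hy
  rw [mem_neighborSet, G1_adj u hn] at hy
  rcases hy with ⟨h1, -⟩ | ⟨h1, -⟩
  · rw [Set.mem_insert_iff]
    left
    rw [eq_sub_iff_add_eq, ← h1]
  · rw [Set.mem_insert_iff, Set.mem_singleton_iff]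
    right
    exact h1

lemma G1_sdeg_le (hn : 3 ≤ n) (x : Fin n) : sdeg ((cycleGraph n).deleteEdges {s(u, u+1)}) x ≤ 2 := by
  calc sdeg ((cycleGraph n).deleteEdges {s(u, u+1)}) x ≤ ({x - 1, x + 1} : Set (Fin n)).ncard :=
        Set.ncard_le_ncard (G1_nbr_subset u hn x) (Set.toFinite _)
    _ ≤ ({x + 1} : Set (Fin n)).ncard + 1 := Set.ncard_insert_le _ _
    _ = 2 := by rw [Set.ncard_singleton]

lemma G1_sdeg_interior (hn : 3 ≤ n) (x : Fin n) (hx : x ≠ u) (hx1 : x - 1 ≠ u) : sdeg ((cycleGraph n).deleteEdges {s(u, u+1)}) x = 2 := by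
  have hset : ((cycleGraph n).deleteEdges {s(u, u+1)}).neighborSet x = {x - 1, x + 1} := by
    apply Set.Subset.antisymm (G1_nbr_subset u hn x)
    rintro y (rfl | rfl)
    · rw [mem_neighborSet, G1_adj u hn]
      left
      exact ⟨(fin_sub_add x).symm, hx1⟩
    · rw [mem_neighborSet, G1_adj u hn]
      right
      exact ⟨rfl, hx⟩
  rw [sdeg, hset, Set.ncard_pair (fin_sub_ne_add hn x)]

end PathPart

lemma cover1 {n : ℕ} (hn : 3 ≤ n) (hmod : n % 3 ≠ 0) {i : ℕ} (hi : i < n) :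
    ∃ j ∈ insert (n-2) ((Finset.range (n/3)).image (fun m => 3*m+1)),
      i = j ∨ i = j + 1 ∨ j = i + 1 := by
  by_cases h : i < 3 * (n / 3)
  · refine ⟨3 * (i / 3) + 1, ?_, by omega⟩
    rw [Finset.mem_insert, Finset.mem_image]
    right
    exact ⟨i / 3, Finset.mem_range.mpr (by omega), rfl⟩
  · exact ⟨n - 2, Finset.mem_insert_self _ _, by omega⟩

lemma path_value {n : ℕ} [NeZero n] (hn : 3 ≤ n) (hmod : n % 3 ≠ 0) (u : Fin n) :
    strongDominationNumber ((cycleGraph n).deleteEdges {s(u, u+1)}) = n / 3 + 1 := by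
  set J : Finset ℕ := insert (n-2) ((Finset.range (n/3)).image (fun m => 3*m+1)) with hJ
  have hJbound : ∀ j ∈ J, 1 ≤ j ∧ j ≤ n - 2 := by
    intro j hj
    rw [hJ, Finset.mem_insert, Finset.mem_image] at hj
    rcases hj with rfl | ⟨m, hm, rfl⟩
    · omega
    · rw [Finset.mem_range] at hm
      omega
  set D : Set (Fin n) := P u '' ↑J with hD
  -- every P j with j ∈ J has degree 2
  have hdeg2 : ∀ j ∈ J, sdeg ((cycleGraph n).deleteEdges {s(u, u+1)}) (P u j) = 2 := by
    intro j hj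
    obtain ⟨hj1, hj2⟩ := hJbound j hj
    apply G1_sdeg_interior u hn
    · intro h
      rw [P_eq_u u (by omega : j < n)] at h
      omega
    · have hP : P u j - 1 = P u (j - 1) := by
        have h6 := P_succ u (j-1)
        rw [show j-1+1 = j from by omega] at h6
        rw [← h6, add_sub_cancel_right]
      rw [hP]
      intro h
      rw [P_eq_u u (by omega : j - 1 < n)] at h
      omega
  have hstrong : IsStrongDominatingSet ((cycleGraph n).deleteEdges {s(u, u+1)}) D := by
    intro x hx
    -- write x = P u i
    set i : ℕ := (x - (u + 1)).val with hidef
    have hi : i < n := (x - (u+1)).is_lt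
    have hxP : x = P u i := by
      rw [P, show ((i + 1 : ℕ) : Fin n) = (i : Fin n) + 1 by push_cast; ring,
        ← add_assoc]
      rw [hidef, Fin.cast_val_eq_self]
      have h5 : u + (x - (u+1)) + 1 = (x - (u+1)) + (u+1) := by ring
      rw [h5, sub_add_cancel]
    obtain ⟨j, hjmem, hrel⟩ := cover1 hn hmod hi
    obtain ⟨hj1, hj2⟩ := hJbound j hjmem
    have hij : i ≠ j := by
      intro h
      apply hx
      rw [hD]
      exact ⟨j, hjmem, by rw [hxP, h]⟩
    refine ⟨P u j, ⟨j, hjmem, rfl⟩, ?_, ?_⟩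
    · rcases hrel with h | h | h
      · omega
      · have := P_adj u hn (show (j + 1) ≤ n - 1 by omega)
        rw [← h] at this
        rw [hxP]
        exact this.symm
      · have := P_adj u hn (show (i + 1) ≤ n - 1 by omega)
        rw [← h] at this
        rw [hxP]
        exact this
    · rw [hdeg2 j hjmem]
      exact G1_sdeg_le u hn x
  have hcardle : D.ncard ≤ n / 3 + 1 := by
    calc D.ncard ≤ (↑J : Set ℕ).ncard := Set.ncard_image_le (Set.toFinite _)
      _ = J.card := Set.ncard_coe_finset J
      _ ≤ ((Finset.range (n/3)).image (fun m => 3*m+1)).card + 1 := Finset.card_insert_le _ _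
      _ ≤ n / 3 + 1 := by
          have := Finset.card_image_le (s := Finset.range (n/3)) (f := fun m => 3*m+1)
          rw [Finset.card_range] at this
          omega
  apply sdn_eq _ _ _ D hstrong hcardle
  intro E hE
  have hcard := card_le_of_dom _ E (fun x hx => by
    obtain ⟨y, h1, h2, -⟩ := hE x hx
    exact ⟨y, h1, h2⟩) (G1_sdeg_le u hn)
  rw [Fintype.card_fin] at hcard
  omega


section SubPart
variable {n : ℕ} [NeZero n] (u : Fin n)

lemma fin_ne_add_one (hn : 3 ≤ n) : u ≠ u + 1 := by
  intro h
  have h2 : u + ((0:ℕ) : Fin n) = u + ((1:ℕ) : Fin n) := by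
    rw [Nat.cast_zero, add_zero, ← fin_one_cast]; exact h
  rw [fin_add_cast_inj (by omega) (by omega)] at h2
  omega

lemma fin_sub_one_ne (hn : 3 ≤ n) (x : Fin n) : x - 1 ≠ x := by
  intro h
  nth_rewrite 2 [← fin_sub_add x] at h
  exact fin_ne_add_one (x - 1) hn h

lemma G2_adj_ss (hn : 3 ≤ n) {x y : Fin n} :
    (subdivide (cycleGraph n) u (u+1)).Adj (some x) (some y) ↔
      (x = y + 1 ∨ y = x + 1) ∧ s(x, y) ≠ s(u, u+1) := by
  rw [subdivide, fromRel_adj]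
  constructor
  · rintro ⟨-, h | h⟩
    · exact ⟨(cyc_adj hn).mp h.1, h.2⟩
    · refine ⟨(cyc_adj hn).mp h.1.symm, fun hs => h.2 ?_⟩
      rw [Sym2.eq_swap]; exact hs
  · rintro ⟨h1, h2⟩
    have hadj : (cycleGraph n).Adj x y := (cyc_adj hn).mpr h1
    exact ⟨by simp [hadj.ne], Or.inl ⟨hadj, h2⟩⟩

lemma G2_adj_sn (hn : 3 ≤ n) {x : Fin n} :
    (subdivide (cycleGraph n) u (u+1)).Adj (some x) none ↔ (x = u ∨ x = u + 1) := by
  rw [subdivide, fromRel_adj]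
  constructor
  · rintro ⟨-, h | h⟩
    · exact h
    · exact h.elim
  · intro h
    exact ⟨by simp, Or.inl h⟩

lemma G2_nbr_none (hn : 3 ≤ n) :
    (subdivide (cycleGraph n) u (u+1)).neighborSet none = {some u, some (u+1)} := by
  ext y
  match y with
  | none => simp [Set.mem_insert_iff]
  | some z =>
      rw [mem_neighborSet, adj_comm, G2_adj_sn u hn]
      simp [Set.mem_insert_iff]

lemma G2_nbr_u (hn : 3 ≤ n) :
    (subdivide (cycleGraph n) u (u+1)).neighborSet (some u) = {none, some (u - 1)} := by
  ext y
  match y with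
  | none =>
      rw [mem_neighborSet, G2_adj_sn u hn]
      simp
  | some z =>
      rw [mem_neighborSet, G2_adj_ss u hn]
      simp only [Set.mem_insert_iff, Set.mem_singleton_iff, reduceCtorEq,
        Option.some.injEq, false_or]
      constructor
      · rintro ⟨h1 | h1, h2⟩
        · rw [h1]; rw [add_sub_cancel_right]
        · exfalso; apply h2; rw [h1]
      · rintro rfl
        refine ⟨Or.inl (fin_sub_add u).symm, fun hs => ?_⟩
        rw [Sym2.eq_iff] at hs
        rcases hs with ⟨-, h2⟩ | ⟨h1, -⟩
        · exact fin_sub_ne_add hn u h2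
        · exact fin_ne_add_one u hn h1

lemma G2_nbr_v (hn : 3 ≤ n) :
    (subdivide (cycleGraph n) u (u+1)).neighborSet (some (u+1)) = {none, some (u+1+1)} := by
  ext y
  match y with
  | none =>
      rw [mem_neighborSet, G2_adj_sn u hn]
      simp
  | some z =>
      rw [mem_neighborSet, G2_adj_ss u hn]
      simp only [Set.mem_insert_iff, Set.mem_singleton_iff, reduceCtorEq,
        Option.some.injEq, false_or]
      constructor
      · rintro ⟨h1 | h1, h2⟩
        · exfalso
          apply h2
          have hz : z = u := by
            have := h1
            rw [add_right_cancel_iff] at this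
            exact this.symm
          rw [hz, Sym2.eq_swap]
        · exact h1
      · rintro rfl
        refine ⟨Or.inr rfl, fun hs => ?_⟩
        rw [show s(u+1, u+1+1) = s(u+1, (u+1)+1) from rfl, sym2_eq_iff hn] at hs
        exact fin_ne_add_one u hn hs.symm

lemma G2_nbr_other (hn : 3 ≤ n) {x : Fin n} (hxu : x ≠ u) (hxv : x ≠ u + 1) :
    (subdivide (cycleGraph n) u (u+1)).neighborSet (some x) = {some (x-1), some (x+1)} := by
  ext y
  match y with
  | none =>
      rw [mem_neighborSet, G2_adj_sn u hn]
      simp only [Set.mem_insert_iff, Set.mem_singleton_iff, reduceCtorEq, or_self,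
        iff_false]
      rintro (h | h)
      · exact hxu h
      · exact hxv h
  | some z =>
      rw [mem_neighborSet, G2_adj_ss u hn]
      simp only [Set.mem_insert_iff, Set.mem_singleton_iff, reduceCtorEq,
        Option.some.injEq, false_or]
      constructor
      · rintro ⟨h1 | h1, -⟩
        · left; rw [h1, add_sub_cancel_right]
        · right; exact h1
      · rintro (rfl | rfl)
        · refine ⟨Or.inl (fin_sub_add x).symm, fun hs => ?_⟩
          have hs2 : s(x - 1, (x-1)+1) = s(u, u+1) := by
            rw [fin_sub_add, Sym2.eq_swap]; exact hs
          rw [sym2_eq_iff hn] at hs2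
          apply hxv
          rw [← hs2, fin_sub_add]
        · refine ⟨Or.inr rfl, fun hs => ?_⟩
          rw [sym2_eq_iff hn] at hs
          exact hxu hs

lemma G2_sdeg (hn : 3 ≤ n) (a : Option (Fin n)) :
    sdeg (subdivide (cycleGraph n) u (u+1)) a = 2 := by
  match a with
  | none =>
      rw [sdeg, G2_nbr_none u hn, Set.ncard_pair]
      intro h
      rw [Option.some.injEq] at h
      exact fin_ne_add_one u hn h
  | some x =>
      by_cases hxu : x = u
      · rw [sdeg, hxu, G2_nbr_u u hn, Set.ncard_pair (by simp)]
      by_cases hxv : x = u + 1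
      · rw [sdeg, hxv, G2_nbr_v u hn, Set.ncard_pair (by simp)]
      · rw [sdeg, G2_nbr_other u hn hxu hxv, Set.ncard_pair]
        intro h
        rw [Option.some.injEq] at h
        exact fin_sub_ne_add hn x h

end SubPart

section SubPart2
variable {n : ℕ} [NeZero n] (u : Fin n)

/-- parameterization of the subdivided cycle: `Q 0 = none`, `Q i = u + i` else. -/
private def Q (i : ℕ) : Option (Fin n) :=
  if i = 0 then none else some (u + (i : Fin n))

lemma Q_adj (hn : 3 ≤ n) {i : ℕ} (hi : i + 1 ≤ n) :
    (subdivide (cycleGraph n) u (u+1)).Adj (Q u i) (Q u (i+1)) := by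
  match i with
  | 0 =>
      rw [Q, Q, if_pos rfl, if_neg (by omega : ¬(0+1 = 0)), adj_comm, G2_adj_sn u hn]
      right
      rw [show ((0+1 : ℕ) : Fin n) = 1 by rw [← fin_one_cast]]
  | (j+1) =>
      rw [Q, Q, if_neg (Nat.succ_ne_zero j), if_neg (Nat.succ_ne_zero (j+1)),
        G2_adj_ss u hn]
      constructor
      · right
        rw [fin_add_one_cast]
      · have h2 : s(u + ((j+1:ℕ) : Fin n), u + ((j+1:ℕ):Fin n) + 1) = s(u, u+1) →
            u + ((j+1:ℕ):Fin n) = u := (sym2_eq_iff hn).mp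
        intro hs
        have h3 := h2 (by rw [fin_add_one_cast]; exact hs)
        nth_rewrite 2 [show u = u + ((0:ℕ) : Fin n) by rw [Nat.cast_zero, add_zero]] at h3
        rw [fin_add_cast_inj (by omega) (by omega)] at h3
        omega

lemma Q_surj (x : Option (Fin n)) : ∃ i ≤ n, Q u i = x := by
  match x with
  | none => exact ⟨0, by omega, rfl⟩
  | some w =>
      by_cases hw : w = u
      · refine ⟨n, le_refl n, ?_⟩
        rw [Q, if_neg (by have := Fin.pos u; omega), Fin.natCast_self, add_zero, hw]
      · refine ⟨(w - u).val, le_of_lt (w - u).is_lt, ?_⟩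
        have hne : (w - u).val ≠ 0 := by
          intro h
          apply hw
          have : w - u = 0 := by rw [Fin.ext_iff, h]; rfl
          rwa [sub_eq_zero] at this
        rw [Q, if_neg hne, Fin.cast_val_eq_self]
        congr 1
        rw [add_comm, sub_add_cancel]

lemma cover2 {n : ℕ} (hn : 3 ≤ n) (hmod : n % 3 ≠ 0) {i : ℕ} (hi : i ≤ n) :
    ∃ j ∈ insert (n-1) ((Finset.range (n/3)).image (fun m => 3*m+1)),
      i = j ∨ i = j + 1 ∨ j = i + 1 := by
  by_cases h : i < 3 * (n / 3)
  · refine ⟨3 * (i / 3) + 1, ?_, by omega⟩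
    rw [Finset.mem_insert, Finset.mem_image]
    right
    exact ⟨i / 3, Finset.mem_range.mpr (by omega), rfl⟩
  · exact ⟨n - 1, Finset.mem_insert_self _ _, by omega⟩

end SubPart2



lemma cyclesub_value {n : ℕ} [NeZero n] (hn : 3 ≤ n) (hmod : n % 3 ≠ 0) (u : Fin n) :
    strongDominationNumber (subdivide (cycleGraph n) u (u+1)) = n / 3 + 1 := by
  set J : Finset ℕ := insert (n-1) ((Finset.range (n/3)).image (fun m => 3*m+1)) with hJ
  have hJbound : ∀ j ∈ J, 1 ≤ j ∧ j ≤ n - 1 := by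
    intro j hj
    rw [hJ, Finset.mem_insert, Finset.mem_image] at hj
    rcases hj with rfl | ⟨m, hm, rfl⟩
    · omega
    · rw [Finset.mem_range] at hm
      omega
  set D : Set (Option (Fin n)) := Q u '' ↑J with hD
  have hstrong : IsStrongDominatingSet (subdivide (cycleGraph n) u (u+1)) D := by
    intro x hx
    obtain ⟨i, hi, hQi⟩ := Q_surj u x
    obtain ⟨j, hjmem, hrel⟩ := cover2 hn hmod hi
    obtain ⟨hj1, hj2⟩ := hJbound j hjmem
    have hij : i ≠ j := by
      intro h
      apply hx
      rw [hD]
      exact ⟨j, hjmem, by rw [← hQi, h]⟩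
    refine ⟨Q u j, ⟨j, hjmem, rfl⟩, ?_, ?_⟩
    · rcases hrel with h | h | h
      · omega
      · have := Q_adj u hn (show j + 1 ≤ n by omega)
        rw [← h, hQi] at this
        exact this.symm
      · have := Q_adj u hn (show i + 1 ≤ n by omega)
        rw [← h, hQi] at this
        exact this
    · rw [G2_sdeg u hn, G2_sdeg u hn]
  have hcardle : D.ncard ≤ n / 3 + 1 := by
    calc D.ncard ≤ (↑J : Set ℕ).ncard := Set.ncard_image_le (Set.toFinite _)
      _ = J.card := Set.ncard_coe_finset J
      _ ≤ ((Finset.range (n/3)).image (fun m => 3*m+1)).card + 1 := Finset.card_insert_le _ _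
      _ ≤ n / 3 + 1 := by
          have := Finset.card_image_le (s := Finset.range (n/3)) (f := fun m => 3*m+1)
          rw [Finset.card_range] at this
          omega
  apply sdn_eq _ _ _ D hstrong hcardle
  intro E hE
  have hcard := card_le_of_dom _ E (fun x hx => by
    obtain ⟨y, h1, h2, -⟩ := hE x hx
    exact ⟨y, h1, h2⟩) (fun y => le_of_eq (G2_sdeg u hn y))
  rw [Fintype.card_option, Fintype.card_fin] at hcard
  omega

lemma subdivide_comm {V : Type*} (G : SimpleGraph V) (u v : V) :
    subdivide G u v = subdivide G v u := by
  ext a b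
  rw [subdivide, subdivide, fromRel_adj, fromRel_adj]
  match a, b with
  | some x, some y =>
      simp only [Sym2.eq_iff]
      constructor <;> (rintro ⟨h1, h2⟩; exact ⟨h1, by tauto⟩)
  | some x, none => constructor <;> (rintro ⟨h1, h2⟩; exact ⟨h1, by tauto⟩)
  | none, some y => constructor <;> (rintro ⟨h1, h2⟩; exact ⟨h1, by tauto⟩)
  | none, none => constructor <;> (rintro ⟨h1, h2⟩; exact ⟨h1, by tauto⟩)


/-- For `n ≥ 3` with `n ≢ 0 (mod 3)` and any edge `e` of `C_n`,
`γst(C_n - e) = γst((C_n)_e)`. -/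
theorem strongDominationNumber_cycle_deleteEdge_eq_subdivide (n : ℕ) (hn : 3 ≤ n)
    (hmod : n % 3 ≠ 0) (u v : Fin n) (huv : (SimpleGraph.cycleGraph n).Adj u v) :
    strongDominationNumber ((SimpleGraph.cycleGraph n).deleteEdges {s(u, v)}) =
      strongDominationNumber (subdivide (SimpleGraph.cycleGraph n) u v) := by
  haveI : NeZero n := ⟨by omega⟩
  rw [cyc_adj hn] at huv
  rcases huv with h | h
  · subst h
    rw [show s(v + 1, v) = s(v, v + 1) from Sym2.eq_swap, subdivide_comm]
    rw [path_value hn hmod v, cyclesub_value hn hmod v]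
  · subst h
    rw [path_value hn hmod u, cyclesub_value hn hmod u]
end

section
/- Let G be a finite simple graph of order n, size m, and minimum degree δ(G) ≥ 2, and let k ≥ 2 be an integer. Then γst(G^{1/k}) ≤ n if k = 2 or k = 3, and γst(G^{1/k}) ≤ n + m·⌈(k−3)/3⌉ if k ≥ 4. -/
open SimpleGraph

section Aux
variable {V : Type*} {G : SimpleGraph V} {k : ℕ}

lemma KS.out_adj (e : G.edgeSet) :
    G.Adj (Quot.out (e : Sym2 V)).1 (Quot.out (e : Sym2 V)).2 := by
  have h : s((Quot.out (e : Sym2 V)).1, (Quot.out (e : Sym2 V)).2) = (e : Sym2 V) :=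
    Quot.out_eq _
  rw [← SimpleGraph.mem_edgeSet, h]; exact e.2

lemma KS.adj_inl_inr {e : G.edgeSet} {i : Fin (k-1)} {x : V} :
    (kSubdivision G k).Adj (.inl x) (.inr (e,i)) ↔
    ((x = (Quot.out (e : Sym2 V)).1 ∧ (i : ℕ) = 0) ∨
     (x = (Quot.out (e : Sym2 V)).2 ∧ (i : ℕ) = k - 2)) := by
  simp [kSubdivision, SimpleGraph.fromRel_adj]

lemma KS.adj_inr_inr {e f : G.edgeSet} {i j : Fin (k-1)} :
    (kSubdivision G k).Adj (.inr (e,i)) (.inr (f,j)) ↔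
    (e = f ∧ ((j:ℕ) = (i:ℕ)+1 ∨ (i:ℕ) = (j:ℕ)+1)) := by
  rw [kSubdivision, SimpleGraph.fromRel_adj]
  constructor
  · rintro ⟨hne, (⟨rfl, h⟩|⟨rfl, h⟩)⟩
    · exact ⟨rfl, Or.inl h⟩
    · exact ⟨rfl, Or.inr h⟩
  · rintro ⟨rfl, (h|h)⟩
    · refine ⟨?_, Or.inl ⟨rfl, h⟩⟩
      simp only [ne_eq, Sum.inr.injEq, Prod.mk.injEq]
      rintro ⟨-, rfl⟩; omega
    · refine ⟨?_, Or.inr ⟨rfl, h⟩⟩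
      simp only [ne_eq, Sum.inr.injEq, Prod.mk.injEq]
      rintro ⟨-, rfl⟩; omega

lemma KS.sdeg_inr_le (hk : 2 ≤ k) (e : G.edgeSet) (i : Fin (k-1)) :
    sdeg (kSubdivision G k) (Sum.inr (e,i)) ≤ 2 := by
  classical
  have hik := i.isLt
  have hsub : ∃ z1 z2 : V ⊕ G.edgeSet × Fin (k-1),
      (kSubdivision G k).neighborSet (Sum.inr (e,i)) ⊆ {z1, z2} := by
    by_cases h0 : (i:ℕ) = 0 <;> by_cases hl : (i:ℕ) = k-2
    · refine ⟨Sum.inl (Quot.out (e : Sym2 V)).1, Sum.inl (Quot.out (e : Sym2 V)).2, ?_⟩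
      rintro (x | ⟨f, j⟩) hz
      · rcases KS.adj_inl_inr.mp hz.symm with ⟨rfl, -⟩ | ⟨rfl, -⟩
        · exact Or.inl rfl
        · exact Or.inr rfl
      · rcases KS.adj_inr_inr.mp hz with ⟨rfl, (h | h)⟩ <;>
          · exfalso; have := j.isLt; omega
    · refine ⟨Sum.inl (Quot.out (e : Sym2 V)).1, Sum.inr (e, ⟨(i:ℕ)+1, by omega⟩), ?_⟩
      rintro (x | ⟨f, j⟩) hz
      · rcases KS.adj_inl_inr.mp hz.symm with ⟨rfl, -⟩ | ⟨rfl, h⟩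
        · exact Or.inl rfl
        · exact absurd h hl
      · rcases KS.adj_inr_inr.mp hz with ⟨rfl, (h | h)⟩
        · have hj : j = ⟨(i:ℕ)+1, by omega⟩ := Fin.ext h
          rw [hj]; exact Or.inr rfl
        · exfalso; omega
    · refine ⟨Sum.inl (Quot.out (e : Sym2 V)).2, Sum.inr (e, ⟨(i:ℕ)-1, by omega⟩), ?_⟩
      rintro (x | ⟨f, j⟩) hz
      · rcases KS.adj_inl_inr.mp hz.symm with ⟨rfl, h⟩ | ⟨rfl, -⟩
        · exact absurd h h0
        · exact Or.inl rfl
      · rcases KS.adj_inr_inr.mp hz with ⟨rfl, (h | h)⟩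
        · exfalso; have := j.isLt; omega
        · have hj : j = ⟨(i:ℕ)-1, by omega⟩ := Fin.ext (show (j:ℕ) = (i:ℕ)-1 by omega)
          rw [hj]; exact Or.inr rfl
    · refine ⟨Sum.inr (e, ⟨(i:ℕ)-1, by omega⟩), Sum.inr (e, ⟨(i:ℕ)+1, by omega⟩), ?_⟩
      rintro (x | ⟨f, j⟩) hz
      · rcases KS.adj_inl_inr.mp hz.symm with ⟨rfl, h⟩ | ⟨rfl, h⟩
        · exact absurd h h0
        · exact absurd h hl
      · rcases KS.adj_inr_inr.mp hz with ⟨rfl, (h | h)⟩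
        · have hj : j = ⟨(i:ℕ)+1, by omega⟩ := Fin.ext h
          rw [hj]; exact Or.inr rfl
        · have hj : j = ⟨(i:ℕ)-1, by omega⟩ := Fin.ext (show (j:ℕ) = (i:ℕ)-1 by omega)
          rw [hj]; exact Or.inl rfl
  obtain ⟨z1, z2, hsub⟩ := hsub
  calc sdeg (kSubdivision G k) (Sum.inr (e,i))
      ≤ ({z1, z2} : Set _).ncard := Set.ncard_le_ncard hsub ((Set.finite_singleton z2).insert z1)
    _ ≤ ({z2} : Set _).ncard + 1 := Set.ncard_insert_le z1 {z2}
    _ ≤ 2 := by simp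

lemma KS.exists_adj_inr (hk : 2 ≤ k) {v w : V} (hvw : G.Adj v w) :
    ∃ p : G.edgeSet × Fin (k-1), (p.1 : Sym2 V) = s(v,w) ∧
      (kSubdivision G k).Adj (Sum.inl v) (Sum.inr p) := by
  set e : G.edgeSet := ⟨s(v,w), hvw⟩ with he
  have hout : s((Quot.out (e : Sym2 V)).1, (Quot.out (e : Sym2 V)).2) = s(v,w) :=
    Quot.out_eq _
  rcases Sym2.eq_iff.mp hout with ⟨h1, h2⟩ | ⟨h1, h2⟩
  · exact ⟨(e, ⟨0, by omega⟩), rfl, KS.adj_inl_inr.mpr (Or.inl ⟨h1.symm, rfl⟩)⟩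
  · exact ⟨(e, ⟨k-2, by omega⟩), rfl, KS.adj_inl_inr.mpr (Or.inr ⟨h2.symm, rfl⟩)⟩

lemma KS.two_le_sdeg [Fintype V] (hδ : ∀ v : V, 2 ≤ sdeg G v) (hk : 2 ≤ k)
    (z : V ⊕ G.edgeSet × Fin (k-1)) : 2 ≤ sdeg (kSubdivision G k) z := by
  classical
  rw [sdeg, show (2:ℕ) = 1 + 1 from rfl, ← Nat.lt_iff_add_one_le,
      Set.one_lt_ncard (Set.toFinite _)]
  match z with
  | Sum.inl v =>
    obtain ⟨w1, hw1, w2, hw2, hne⟩ :=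
      (Set.one_lt_ncard (Set.toFinite _)).mp (lt_of_lt_of_le one_lt_two (hδ v))
    obtain ⟨p1, hp1, hadj1⟩ := KS.exists_adj_inr (G := G) hk hw1
    obtain ⟨p2, hp2, hadj2⟩ := KS.exists_adj_inr (G := G) hk hw2
    refine ⟨Sum.inr p1, hadj1, Sum.inr p2, hadj2, ?_⟩
    simp only [ne_eq, Sum.inr.injEq]
    intro h
    apply hne
    have : (p1.1 : Sym2 V) = (p2.1 : Sym2 V) := by rw [h]
    rw [hp1, hp2] at this
    exact Sym2.congr_right.mp this
  | Sum.inr (e, i) =>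
    have hik := i.isLt
    by_cases h0 : (i:ℕ) = 0 <;> by_cases hl : (i:ℕ) = k-2
    · refine ⟨Sum.inl (Quot.out (e : Sym2 V)).1,
        (KS.adj_inl_inr.mpr (Or.inl ⟨rfl, h0⟩)).symm,
        Sum.inl (Quot.out (e : Sym2 V)).2,
        (KS.adj_inl_inr.mpr (Or.inr ⟨rfl, hl⟩)).symm, ?_⟩
      simp only [ne_eq, Sum.inl.injEq]
      exact (KS.out_adj e).ne
    · refine ⟨Sum.inl (Quot.out (e : Sym2 V)).1,
        (KS.adj_inl_inr.mpr (Or.inl ⟨rfl, h0⟩)).symm,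
        Sum.inr (e, ⟨(i:ℕ)+1, by omega⟩),
        KS.adj_inr_inr.mpr ⟨rfl, Or.inl rfl⟩, by simp⟩
    · refine ⟨Sum.inl (Quot.out (e : Sym2 V)).2,
        (KS.adj_inl_inr.mpr (Or.inr ⟨rfl, hl⟩)).symm,
        Sum.inr (e, ⟨(i:ℕ)-1, by omega⟩),
        KS.adj_inr_inr.mpr ⟨rfl, Or.inr (show (i:ℕ) = ((i:ℕ)-1)+1 by omega)⟩, by simp⟩
    · refine ⟨Sum.inr (e, ⟨(i:ℕ)-1, by omega⟩),
        KS.adj_inr_inr.mpr ⟨rfl, Or.inr (show (i:ℕ) = ((i:ℕ)-1)+1 by omega)⟩,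
        Sum.inr (e, ⟨(i:ℕ)+1, by omega⟩),
        KS.adj_inr_inr.mpr ⟨rfl, Or.inl rfl⟩, ?_⟩
      simp only [ne_eq, Sum.inr.injEq, Prod.mk.injEq, true_and]
      intro h
      have : ((i:ℕ)-1) = ((i:ℕ)+1) := congrArg Fin.val h
      omega

def KS.Dset (G : SimpleGraph V) (k : ℕ) : Set (V ⊕ G.edgeSet × Fin (k-1)) :=
  Set.range Sum.inl ∪ Sum.inr '' {p : G.edgeSet × Fin (k-1) | (p.2 : ℕ) % 3 = 2}

lemma KS.Dset_isSDS [Fintype V] (hδ : ∀ v : V, 2 ≤ sdeg G v) (hk : 2 ≤ k) :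
    IsStrongDominatingSet (kSubdivision G k) (KS.Dset G k) := by
  rintro (v | ⟨e, i⟩) hx
  · exact absurd (Or.inl (Set.mem_range_self v)) hx
  have hik := i.isLt
  have hi : ¬ ((i:ℕ) % 3 = 2) := fun h => hx (Or.inr ⟨(e,i), h, rfl⟩)
  have hle := KS.sdeg_inr_le hk e i
  have hge := KS.two_le_sdeg hδ hk (G := G)
  by_cases h0 : (i:ℕ) = 0
  · exact ⟨Sum.inl (Quot.out (e : Sym2 V)).1, Or.inl ⟨_, rfl⟩,
      (KS.adj_inl_inr.mpr (Or.inl ⟨rfl, h0⟩)).symm, le_trans hle (hge _)⟩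
  by_cases hl : (i:ℕ) = k-2
  · exact ⟨Sum.inl (Quot.out (e : Sym2 V)).2, Or.inl ⟨_, rfl⟩,
      (KS.adj_inl_inr.mpr (Or.inr ⟨rfl, hl⟩)).symm, le_trans hle (hge _)⟩
  by_cases h3 : (i:ℕ) % 3 = 0
  · exact ⟨Sum.inr (e, ⟨(i:ℕ)-1, by omega⟩),
      Or.inr ⟨_, show ((i:ℕ)-1) % 3 = 2 by omega, rfl⟩,
      KS.adj_inr_inr.mpr ⟨rfl, Or.inr (show (i:ℕ) = ((i:ℕ)-1)+1 by omega)⟩,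
      le_trans hle (hge _)⟩
  · have hlt : (i:ℕ) < k - 2 := by omega
    exact ⟨Sum.inr (e, ⟨(i:ℕ)+1, by omega⟩),
      Or.inr ⟨_, show ((i:ℕ)+1) % 3 = 2 by omega, rfl⟩,
      KS.adj_inr_inr.mpr ⟨rfl, Or.inl rfl⟩,
      le_trans hle (hge _)⟩

lemma KS.Dset_ncard_le [Fintype V] :
    (KS.Dset G k).ncard ≤ Fintype.card V + G.edgeSet.ncard * ((k-1)/3) := by
  classical
  set S : Set (Fin (k-1)) := {i : Fin (k-1) | (i : ℕ) % 3 = 2} with hS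
  set T : Set (G.edgeSet × Fin (k-1)) := {p | (p.2 : ℕ) % 3 = 2} with hT
  have h1 : (Set.range (Sum.inl : V → V ⊕ G.edgeSet × Fin (k-1))).ncard = Fintype.card V := by
    rw [← Set.image_univ, Set.ncard_image_of_injective _ Sum.inl_injective,
      Set.ncard_univ, Nat.card_eq_fintype_card]
  have h3 : T = (Set.univ : Set G.edgeSet) ×ˢ S := by
    ext ⟨e, i⟩; simp [hS, hT]
  have h4 : T.ncard = G.edgeSet.ncard * S.ncard := by
    rw [h3, ← Nat.card_coe_set_eq, Nat.card_congr (Equiv.Set.prod _ _), Nat.card_prod,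
      Nat.card_coe_set_eq, Nat.card_coe_set_eq, Set.ncard_univ,
      Nat.card_coe_set_eq]
  have h5 : S.ncard ≤ (k-1)/3 := by
    have hm : ∀ i ∈ S, (fun i : Fin (k-1) => (i:ℕ)/3) i ∈ Set.Iio ((k-1)/3) := by
      intro i hi
      have hik := i.isLt
      have : (i:ℕ) % 3 = 2 := hi
      simp only [Set.mem_Iio]
      omega
    have hinj : Set.InjOn (fun i : Fin (k-1) => (i:ℕ)/3) S := by
      intro i hi j hj h
      have h1 : (i:ℕ) % 3 = 2 := hi
      have h2 : (j:ℕ) % 3 = 2 := hj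
      simp only at h
      exact Fin.ext (by omega)
    have := Set.ncard_le_ncard_of_injOn _ hm hinj (Set.finite_Iio _)
    rwa [← Finset.coe_range, Set.ncard_coe_finset, Finset.card_range] at this
  calc (KS.Dset G k).ncard
      ≤ (Set.range (Sum.inl : V → V ⊕ G.edgeSet × Fin (k-1))).ncard
        + (Sum.inr '' T).ncard := Set.ncard_union_le _ _
    _ = Fintype.card V + T.ncard := by
        rw [h1, Set.ncard_image_of_injective _ Sum.inr_injective]
    _ ≤ Fintype.card V + G.edgeSet.ncard * ((k-1)/3) := by
        rw [h4]
        exact Nat.add_le_add_left (Nat.mul_le_mul_left _ h5) _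

end Aux


/-- If `δ(G) ≥ 2`, then `γst(G^{1/k}) ≤ n` for `k = 2, 3` and
`γst(G^{1/k}) ≤ n + m⌈(k-3)/3⌉` for `k ≥ 4`. -/
theorem strongDominationNumber_kSubdivision_minDegree_two_le {V : Type*} [Fintype V]
    (G : SimpleGraph V) (hδ : ∀ v : V, 2 ≤ sdeg G v) (k : ℕ) (hk : 2 ≤ k) :
    ((k = 2 ∨ k = 3) →
      strongDominationNumber (kSubdivision G k) ≤ Fintype.card V) ∧
    (4 ≤ k →
      strongDominationNumber (kSubdivision G k) ≤
        Fintype.card V + G.edgeSet.ncard * ((k - 3 + 2) / 3)) := by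
  have key : strongDominationNumber (kSubdivision G k) ≤
      Fintype.card V + G.edgeSet.ncard * ((k-1)/3) :=
    le_trans (Nat.sInf_le ⟨KS.Dset G k, KS.Dset_isSDS hδ hk, rfl⟩) KS.Dset_ncard_le
  constructor
  · rintro (rfl | rfl) <;> simpa using key
  · intro h4
    have h : k - 3 + 2 = k - 1 := by omega
    rw [h]; exact key
end

section
/- Let G_1 and G_2 be finite simple graphs with G_2 having at least one vertex. Then the strong domination number of the corona product equals the order of G_1: γst(G_1 ∘ G_2) = |V(G_1)|; moreover, V(G_1) itself is a minimum strong dominating set of G_1 ∘ G_2. -/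
open SimpleGraph

section Aux

variable {V1 V2 : Type*} {G1 : SimpleGraph V1} {G2 : SimpleGraph V2}

lemma corona_adj_inr_inl {i j : V1} {y : V2} :
    (corona G1 G2).Adj (.inr (i,y)) (.inl j) ↔ j = i := by
  simp [corona, SimpleGraph.fromRel_adj]

lemma corona_adj_inr_inr {i j : V1} {y z : V2} :
    (corona G1 G2).Adj (.inr (i,y)) (.inr (j,z)) ↔ i = j ∧ G2.Adj y z := by
  simp only [corona, SimpleGraph.fromRel_adj, ne_eq, Sum.inr.injEq, Prod.mk.injEq, not_and]
  constructor
  · rintro ⟨h1, h2 | h2⟩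
    exacts [h2, ⟨h2.1.symm, h2.2.symm⟩]
  · rintro ⟨rfl, h⟩
    exact ⟨fun _ => h.ne, Or.inl ⟨rfl, h⟩⟩

lemma corona_adj_inl_inr {i j : V1} {y : V2} :
    (corona G1 G2).Adj (.inl j) (.inr (i,y)) ↔ j = i := by
  simp [corona, SimpleGraph.fromRel_adj]

lemma corona_neighborSet_inr (i : V1) (y : V2) :
    (corona G1 G2).neighborSet (.inr (i,y)) =
      {Sum.inl i} ∪ (fun z => Sum.inr (i, z)) '' (G2.neighborSet y) := by
  ext x
  rcases x with j | ⟨j, z⟩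
  · simp [SimpleGraph.neighborSet, corona_adj_inr_inl, eq_comm]
  · simp only [SimpleGraph.mem_neighborSet, corona_adj_inr_inr, Set.mem_union,
      Set.mem_singleton_iff, Set.mem_image, SimpleGraph.mem_neighborSet]
    constructor
    · rintro ⟨rfl, h⟩
      exact Or.inr ⟨z, h, rfl⟩
    · rintro (h | ⟨w, hw, h⟩)
      · exact absurd h (by simp)
      · obtain ⟨rfl, rfl⟩ : i = j ∧ w = z := by simpa [eq_comm] using h
        exact ⟨rfl, hw⟩

lemma sdeg_corona_le [Fintype V1] [Fintype V2] (i : V1) (y : V2) :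
    sdeg (corona G1 G2) (.inr (i,y)) ≤ sdeg (corona G1 G2) (.inl i) := by
  apply Set.ncard_le_ncard_of_injOn
    (fun x => match x with
      | .inl _ => Sum.inr (i, y)
      | .inr p => Sum.inr p)
  · intro a ha
    rcases a with j | ⟨j, z⟩
    · simpa using corona_adj_inl_inr.2 rfl
    · rw [corona_neighborSet_inr] at ha
      simp only [Set.mem_union, Set.mem_singleton_iff, Set.mem_image] at ha
      rcases ha with h | ⟨w, hw, h⟩
      · exact absurd h (by simp)
      · obtain ⟨rfl, rfl⟩ : i = j ∧ w = z := by simpa [eq_comm] using h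
        simpa using corona_adj_inl_inr.2 rfl
  · intro a ha b hb hab
    rw [corona_neighborSet_inr] at ha hb
    rcases a with j | ⟨j, z⟩ <;> rcases b with k | ⟨k, w⟩
    · have : j = i := by simpa using ha
      have : k = i := by simpa using hb
      simp_all
    · exfalso
      simp only [Set.mem_union, Set.mem_singleton_iff, Set.mem_image] at hb
      rcases hb with h | ⟨u, hu, h⟩
      · exact absurd h (by simp)
      obtain ⟨rfl, rfl⟩ : i = k ∧ u = w := by simpa [eq_comm] using h
      simp only [Sum.inr.injEq, Prod.mk.injEq] at hab
      exact hu.ne hab.2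
    · exfalso
      simp only [Set.mem_union, Set.mem_singleton_iff, Set.mem_image] at ha
      rcases ha with h | ⟨u, hu, h⟩
      · exact absurd h (by simp)
      obtain ⟨rfl, rfl⟩ : i = j ∧ u = z := by simpa [eq_comm] using h
      simp only [Sum.inr.injEq, Prod.mk.injEq] at hab
      exact hu.ne hab.2.symm
    · exact hab

end Aux

/-- `γst(G₁ ∘ G₂) = |V(G₁)|`, and `V(G₁)` itself is a minimum strong
dominating set of the corona product. -/
theorem strongDominationNumber_corona {V1 V2 : Type*} [Fintype V1] [Fintype V2]
    [Nonempty V2] (G1 : SimpleGraph V1) (G2 : SimpleGraph V2) :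
    strongDominationNumber (corona G1 G2) = Fintype.card V1 ∧
    IsStrongDominatingSet (corona G1 G2)
      (Set.range (Sum.inl : V1 → V1 ⊕ V1 × V2)) ∧
    (Set.range (Sum.inl : V1 → V1 ⊕ V1 × V2)).ncard =
      strongDominationNumber (corona G1 G2) := by
  have hsds : IsStrongDominatingSet (corona G1 G2)
      (Set.range (Sum.inl : V1 → V1 ⊕ V1 × V2)) := by
    intro x hx
    rcases x with j | ⟨i, y⟩
    · exact absurd ⟨j, rfl⟩ hx
    · exact ⟨.inl i, ⟨i, rfl⟩, corona_adj_inr_inl.2 rfl, sdeg_corona_le i y⟩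
  have hcard : (Set.range (Sum.inl : V1 → V1 ⊕ V1 × V2)).ncard = Fintype.card V1 := by
    rw [← Set.image_univ, Set.ncard_image_of_injective _ Sum.inl_injective,
      Set.ncard_univ, Nat.card_eq_fintype_card]
  have hmem : Fintype.card V1 ∈ {n | ∃ D : Set (V1 ⊕ V1 × V2),
      IsStrongDominatingSet (corona G1 G2) D ∧ D.ncard = n} :=
    ⟨_, hsds, hcard⟩
  have hlb : ∀ n ∈ {n | ∃ D : Set (V1 ⊕ V1 × V2),
      IsStrongDominatingSet (corona G1 G2) D ∧ D.ncard = n}, Fintype.card V1 ≤ n := by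
    rintro n ⟨D, hD, rfl⟩
    classical
    let y0 : V2 := Classical.arbitrary V2
    have key : ∀ i : V1, ∃ d ∈ D, d = Sum.inl i ∨ ∃ z : V2, d = Sum.inr (i, z) := by
      intro i
      by_cases hx : (Sum.inr (i, y0) : V1 ⊕ V1 × V2) ∈ D
      · exact ⟨_, hx, Or.inr ⟨y0, rfl⟩⟩
      · obtain ⟨d, hdD, hadj, -⟩ := hD _ hx
        refine ⟨d, hdD, ?_⟩
        have hd : d ∈ (corona G1 G2).neighborSet (.inr (i, y0)) := hadj
        rw [corona_neighborSet_inr] at hd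
        rcases hd with h | ⟨w, _, h⟩
        · exact Or.inl h
        · exact Or.inr ⟨w, h.symm⟩
    choose g hgD hg using key
    have hginj : Function.Injective g := by
      intro a b hab
      rcases hg a with h1 | ⟨z1, h1⟩ <;> rcases hg b with h2 | ⟨z2, h2⟩ <;>
        rw [h1, h2] at hab <;> simp_all
    calc Fintype.card V1 = (Set.range g).ncard := by
          rw [← Set.image_univ, Set.ncard_image_of_injective _ hginj,
            Set.ncard_univ, Nat.card_eq_fintype_card]
      _ ≤ D.ncard := Set.ncard_le_ncard (Set.range_subset_iff.2 hgD) (Set.toFinite D)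
  have hnum : strongDominationNumber (corona G1 G2) = Fintype.card V1 :=
    le_antisymm (Nat.sInf_le hmem) (le_csInf ⟨_, hmem⟩ hlb)
  exact ⟨hnum, hsds, by rw [hcard, hnum]⟩
end

section
/- Let k ≥ 1 and let e be any edge of the cycle graph C_{3k+1}. Then γst(C_{3k+1}/e) = γst(C_{3k+1}) − 1 = k; that is, the lower bound γst(G) − deg(u) − deg(v) + 3 for the strong domination number of an edge contraction is attained with equality for the cycles C_{3k+1}. -/
open SimpleGraph

/-! ### Auxiliary lemmas -/

lemma sdeg_eq_degree {V : Type*} [Fintype V] (G : SimpleGraph V) [DecidableRel G.Adj]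
    (v : V) : sdeg G v = G.degree v := by
  rw [sdeg, SimpleGraph.degree, neighborFinset_def, Set.ncard_eq_toFinset_card']

lemma cycle_sdeg {n : ℕ} (x : Fin (n + 3)) : sdeg (cycleGraph (n + 3)) x = 2 := by
  rw [sdeg_eq_degree, cycleGraph_degree_three_le]

lemma cycle_adj_val {n : ℕ} {x y : Fin (n + 3)} :
    (cycleGraph (n + 3)).Adj x y ↔
      (x.val + 1) % (n + 3) = y.val ∨ (y.val + 1) % (n + 3) = x.val := by
  have h2 : (cycleGraph (n + 1 + 2)).Adj x y ↔ x - y = 1 ∨ y - x = 1 := cycleGraph_adj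
  have key : ∀ a b : Fin (n + 3), (a - b = 1 ↔ (b.val + 1) % (n + 3) = a.val) := by
    intro a b
    rw [sub_eq_iff_eq_add, Fin.ext_iff]
    simp only [Fin.val_add, Fin.val_one]
    rw [Nat.add_comm 1 b.val]
    omega
  rw [h2, key x y, key y x]
  tauto

lemma sdeg_map {V W : Type*} {G : SimpleGraph V} {G' : SimpleGraph W} (e : G ≃g G') (x : V) :
    sdeg G' (e x) = sdeg G x := by
  rw [sdeg, sdeg, ← Nat.card_coe_set_eq, ← Nat.card_coe_set_eq]
  exact Nat.card_congr (e.mapNeighborSet x).symm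

lemma isStrongDominatingSet_image {V W : Type*} {G : SimpleGraph V} {G' : SimpleGraph W}
    (e : G ≃g G') {D : Set V} (hD : IsStrongDominatingSet G D) :
    IsStrongDominatingSet G' (e '' D) := by
  intro x hx
  obtain ⟨y, hyD, hadj, hdeg⟩ := hD (e.symm x) (by
    intro h; exact hx ⟨e.symm x, h, by simp⟩)
  refine ⟨e y, ⟨y, hyD, rfl⟩, ?_, ?_⟩
  · have := e.map_adj_iff.mpr hadj
    simpa using this
  · rw [sdeg_map e y]
    have := sdeg_map e (e.symm x)
    simp only [RelIso.apply_symm_apply] at this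
    rw [this]; exact hdeg

lemma sdnSet_nonempty {V : Type*} (G : SimpleGraph V) :
    {n | ∃ D : Set V, IsStrongDominatingSet G D ∧ D.ncard = n}.Nonempty :=
  ⟨(Set.univ : Set V).ncard, Set.univ, fun x hx => absurd (Set.mem_univ x) hx, rfl⟩

lemma strongDominationNumber_le_of_iso {V W : Type*} {G : SimpleGraph V} {G' : SimpleGraph W}
    (e : G ≃g G') : strongDominationNumber G' ≤ strongDominationNumber G := by
  have hmem := Nat.sInf_mem (sdnSet_nonempty G)
  obtain ⟨D, hD, hcard⟩ := hmem
  exact Nat.sInf_le ⟨e '' D, isStrongDominatingSet_image e hD,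
    by rw [Set.ncard_image_of_injective _ e.injective]; exact hcard⟩

lemma strongDominationNumber_eq_of_iso {V W : Type*} {G : SimpleGraph V} {G' : SimpleGraph W}
    (e : G ≃g G') : strongDominationNumber G = strongDominationNumber G' :=
  le_antisymm (strongDominationNumber_le_of_iso e.symm) (strongDominationNumber_le_of_iso e)

/-! ### The strong domination number of cycles -/

lemma cycle_lower {m : ℕ} {D : Set (Fin (m + 3))}
    (hD : IsStrongDominatingSet (cycleGraph (m + 3)) D) : m + 3 ≤ 3 * D.ncard := by
  classical
  have hfin : D.Finite := Set.toFinite D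
  set Df := hfin.toFinset with hDf
  have hsub : Finset.univ ⊆ Df.biUnion
      (fun y => insert y ((cycleGraph (m + 3)).neighborFinset y)) := by
    intro x _
    rw [Finset.mem_biUnion]
    by_cases hx : x ∈ D
    · exact ⟨x, hfin.mem_toFinset.mpr hx, Finset.mem_insert_self _ _⟩
    · obtain ⟨y, hyD, hadj, _⟩ := hD x hx
      exact ⟨y, hfin.mem_toFinset.mpr hyD,
        Finset.mem_insert_of_mem (by rw [mem_neighborFinset]; exact hadj.symm)⟩
  have h1 : m + 3 ≤ (Df.biUnion
      (fun y => insert y ((cycleGraph (m + 3)).neighborFinset y))).card := by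
    calc m + 3 = (Finset.univ : Finset (Fin (m + 3))).card := by simp
    _ ≤ _ := Finset.card_le_card hsub
  have h2 : (Df.biUnion (fun y => insert y ((cycleGraph (m + 3)).neighborFinset y))).card
      ≤ 3 * Df.card := by
    refine le_trans (Finset.card_biUnion_le) ?_
    rw [mul_comm]
    refine Finset.sum_le_card_nsmul _ _ 3 ?_
    intro y _
    calc (insert y ((cycleGraph (m + 3)).neighborFinset y)).card
        ≤ ((cycleGraph (m + 3)).neighborFinset y).card + 1 := Finset.card_insert_le _ _
      _ = 3 := by rw [card_neighborFinset_eq_degree, cycleGraph_degree_three_le]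
  have h3 : D.ncard = Df.card := Set.ncard_eq_toFinset_card D hfin
  omega

lemma cycle_upper (m : ℕ) :
    ∃ D : Set (Fin (m + 3)), IsStrongDominatingSet (cycleGraph (m + 3)) D ∧
      D.ncard = (m + 5) / 3 := by
  set n := m + 3 with hn
  refine ⟨{x : Fin n | 3 ∣ x.val}, ?_, ?_⟩
  · intro x hx
    simp only [Set.mem_setOf_eq] at hx
    have hxlt : x.val < n := x.isLt
    by_cases h1 : x.val % 3 = 1
    · refine ⟨⟨x.val - 1, by omega⟩, by simp only [Set.mem_setOf_eq]; omega, ?_, ?_⟩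
      · rw [cycle_adj_val]
        right
        show (x.val - 1 + 1) % (m + 3) = x.val
        rw [Nat.mod_eq_of_lt (by omega)]
        omega
      · rw [cycle_sdeg, cycle_sdeg]
    · have h2 : x.val % 3 = 2 := by omega
      by_cases hlast : x.val + 1 < n
      · refine ⟨⟨x.val + 1, hlast⟩, by simp only [Set.mem_setOf_eq]; omega, ?_, ?_⟩
        · rw [cycle_adj_val]
          left
          show (x.val + 1) % (m + 3) = x.val + 1
          rw [Nat.mod_eq_of_lt (by omega)]
        · rw [cycle_sdeg, cycle_sdeg]
      · refine ⟨⟨0, by omega⟩, by simp only [Set.mem_setOf_eq]; omega, ?_, ?_⟩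
        · rw [cycle_adj_val]
          left
          show (x.val + 1) % (m + 3) = 0
          have hx1 : x.val + 1 = m + 3 := by omega
          rw [hx1, Nat.mod_self]
        · rw [cycle_sdeg, cycle_sdeg]
  · have hrange : {x : Fin n | 3 ∣ x.val} =
        Set.range (fun i : Fin ((n + 2) / 3) => (⟨3 * i.val, by omega⟩ : Fin n)) := by
      ext x
      simp only [Set.mem_setOf_eq, Set.mem_range]
      constructor
      · rintro ⟨q, hq⟩
        have hxlt : x.val < n := x.isLt
        refine ⟨⟨q, by omega⟩, ?_⟩
        apply Fin.ext
        simp [hq, mul_comm]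
      · rintro ⟨i, rfl⟩
        exact ⟨i.val, rfl⟩
    rw [hrange, ← Set.image_univ, Set.ncard_image_of_injective _ ?_, Set.ncard_univ]
    · simp only [Nat.card_eq_fintype_card, Fintype.card_fin]; omega
    · intro a b hab
      have := Fin.val_eq_of_eq hab
      simp at this
      exact Fin.ext (by omega)

lemma cycle_sdn (n : ℕ) (hn : 3 ≤ n) :
    strongDominationNumber (cycleGraph n) = (n + 2) / 3 := by
  obtain ⟨m, rfl⟩ : ∃ m, n = m + 3 := ⟨n - 3, by omega⟩
  apply le_antisymm
  · obtain ⟨D, hD, hcard⟩ := cycle_upper m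
    exact Nat.sInf_le ⟨D, hD, by omega⟩
  · apply le_csInf
    · obtain ⟨D, hD, hcard⟩ := cycle_upper m
      exact ⟨_, D, hD, hcard⟩
    · rintro b ⟨D, hD, rfl⟩
      have := cycle_lower hD
      omega

/-! ### Automorphisms of the cycle -/

lemma cga {m : ℕ} {u v : Fin (m + 3)} :
    (cycleGraph (m + 3)).Adj u v ↔ u - v = 1 ∨ v - u = 1 :=
  cycleGraph_adj (n := m + 1)

def rotIso (m : ℕ) (c : Fin (m + 3)) : cycleGraph (m + 3) ≃g cycleGraph (m + 3) where
  toEquiv := Equiv.addRight c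
  map_rel_iff' := by
    intro a b
    simp only [Equiv.coe_addRight]
    rw [cga, cga, add_sub_add_right_eq_sub, add_sub_add_right_eq_sub]

def reflIso (m : ℕ) (c : Fin (m + 3)) : cycleGraph (m + 3) ≃g cycleGraph (m + 3) where
  toEquiv := Equiv.subLeft c
  map_rel_iff' := by
    intro a b
    simp only [Equiv.subLeft_apply]
    rw [cga, cga, sub_sub_sub_cancel_left, sub_sub_sub_cancel_left]
    exact or_comm

lemma exists_auto {m : ℕ} {u v : Fin (m + 3)} (huv : (cycleGraph (m + 3)).Adj u v) :
    ∃ e : cycleGraph (m + 3) ≃g cycleGraph (m + 3),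
      e.toEquiv u = ⟨m + 1, by omega⟩ ∧ e.toEquiv v = ⟨m + 2, by omega⟩ := by
  have hadd : (⟨m + 1, by omega⟩ : Fin (m + 3)) + 1 = ⟨m + 2, by omega⟩ := by
    apply Fin.ext
    rw [Fin.val_add, Fin.val_one]
    show (m + 1 + 1) % (m + 3) = m + 2
    exact Nat.mod_eq_of_lt (by omega)
  have hsub : (⟨m + 2, by omega⟩ : Fin (m + 3)) - 1 = ⟨m + 1, by omega⟩ := by
    rw [← hadd]; exact add_sub_cancel_right _ 1
  rcases cga.mp huv with h | h
  · have hu : u = v + 1 := by rw [← h]; abel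
    refine ⟨reflIso m (⟨m + 2, by omega⟩ + v), ?_, ?_⟩
    · show (⟨m + 2, by omega⟩ : Fin (m + 3)) + v - u = ⟨m + 1, by omega⟩
      rw [← hsub, hu]; abel
    · show (⟨m + 2, by omega⟩ : Fin (m + 3)) + v - v = ⟨m + 2, by omega⟩
      abel
  · have hv : v = u + 1 := by rw [← h]; abel
    refine ⟨rotIso m ((⟨m + 2, by omega⟩ : Fin (m + 3)) - v), ?_, ?_⟩
    · show u + ((⟨m + 2, by omega⟩ : Fin (m + 3)) - v) = ⟨m + 1, by omega⟩
      rw [← hsub, hv]; abel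
    · show v + ((⟨m + 2, by omega⟩ : Fin (m + 3)) - v) = ⟨m + 2, by omega⟩
      abel

/-! ### Isomorphisms for contracted graphs -/

def contractEdgeIso {V W : Type*} {G : SimpleGraph V} {G' : SimpleGraph W} (e : G ≃g G')
    (u v : V) : contractEdge G u v ≃g contractEdge G' (e.toEquiv u) (e.toEquiv v) where
  toEquiv := Equiv.subtypeEquiv e.toEquiv (fun x => not_congr
    ⟨fun h => by rw [h], fun h => e.injective h⟩)
  map_rel_iff' := by
    intro a b
    simp only [contractEdge, fromRel_adj, Equiv.subtypeEquiv_apply, ne_eq,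
      Subtype.mk.injEq, Subtype.ext_iff]
    have hco : ∀ x : V, e.toEquiv x = e x := fun _ => rfl
    have madj : ∀ x y : V, G'.Adj (e x) (e y) ↔ G.Adj x y :=
      fun x y => e.map_adj_iff
    have minj : ∀ x y : V, (e x = e y) ↔ x = y :=
      fun x y => ⟨fun h => e.injective h, fun h => by rw [h]⟩
    simp only [hco, madj, minj]

noncomputable def contractCycleIso (m : ℕ) :
    contractEdge (cycleGraph (m + 4)) ⟨m + 2, by omega⟩ ⟨m + 3, by omega⟩ ≃g
      cycleGraph (m + 3) where
  toEquiv := {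
    toFun := fun a => ⟨a.1.val, by
      have h1 := a.1.isLt
      have h2 : a.1.val ≠ m + 3 := fun h => a.2 (Fin.ext h)
      omega⟩
    invFun := fun i => ⟨⟨i.val, by omega⟩, fun h => by
      have h2 : (i.val : ℕ) = m + 3 := congrArg Fin.val h
      omega⟩
    left_inv := fun a => Subtype.ext (Fin.ext rfl)
    right_inv := fun i => Fin.ext rfl }
  map_rel_iff' := by
    intro a b
    have ha : a.1.val ≠ m + 3 := fun h => a.2 (Fin.ext h)
    have hb : b.1.val ≠ m + 3 := fun h => b.2 (Fin.ext h)
    have ha1 : a.1.val < m + 4 := a.1.isLt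
    have hb1 : b.1.val < m + 4 := b.1.isLt
    simp only [contractEdge, fromRel_adj, Equiv.coe_fn_mk,
      cycle_adj_val (n := m),
      Subtype.ext_iff, Fin.ext_iff, ne_eq]
    have c4 : ∀ x y : Fin (m + 4), (cycleGraph (m + 4)).Adj x y ↔
        (x.val + 1) % (m + 4) = y.val ∨ (y.val + 1) % (m + 4) = x.val :=
      fun x y => cycle_adj_val (n := m + 1)
    simp only [c4]
    have k1 : (a.1.val + 1) % (m + 4) = a.1.val + 1 := Nat.mod_eq_of_lt (by omega)
    have k2 : (b.1.val + 1) % (m + 4) = b.1.val + 1 := Nat.mod_eq_of_lt (by omega)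
    have k3 : ((⟨m + 3, by omega⟩ : Fin (m + 4)).val + 1) % (m + 4) = 0 := by
      show (m + 3 + 1) % (m + 4) = 0
      exact Nat.mod_self (m + 4)
    rw [k1, k2, k3]
    clear c4 k1 k2 k3
    by_cases hA : a.1.val = m + 2
    · have k6 : (a.1.val + 1) % (m + 3) = 0 := by
        rw [hA]; exact Nat.mod_self (m + 3)
      rw [k6]
      by_cases hB : b.1.val = m + 2
      · have k7 : (b.1.val + 1) % (m + 3) = 0 := by
          rw [hB]; exact Nat.mod_self (m + 3)
        rw [k7]; omega
      · have k7 : (b.1.val + 1) % (m + 3) = b.1.val + 1 := Nat.mod_eq_of_lt (by omega)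
        rw [k7]; omega
    · have k6 : (a.1.val + 1) % (m + 3) = a.1.val + 1 := Nat.mod_eq_of_lt (by omega)
      rw [k6]
      by_cases hB : b.1.val = m + 2
      · have k7 : (b.1.val + 1) % (m + 3) = 0 := by
          rw [hB]; exact Nat.mod_self (m + 3)
        rw [k7]; omega
      · have k7 : (b.1.val + 1) % (m + 3) = b.1.val + 1 := Nat.mod_eq_of_lt (by omega)
        rw [k7]; omega

lemma core {n : ℕ} (hn : 4 ≤ n) (u v : Fin n) (huv : (cycleGraph n).Adj u v) :
    strongDominationNumber (contractEdge (cycleGraph n) u v) = (n + 1) / 3 := by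
  obtain ⟨m, rfl⟩ : ∃ m, n = m + 4 := ⟨n - 4, by omega⟩
  obtain ⟨e, he1, he2⟩ := exists_auto (m := m + 1) huv
  have h1 : strongDominationNumber (contractEdge (cycleGraph (m + 4)) u v) =
      strongDominationNumber
        (contractEdge (cycleGraph (m + 4)) (e.toEquiv u) (e.toEquiv v)) :=
    strongDominationNumber_eq_of_iso (contractEdgeIso e u v)
  rw [he1, he2] at h1
  have h2 : strongDominationNumber
      (contractEdge (cycleGraph (m + 4)) ⟨m + 2, by omega⟩ ⟨m + 3, by omega⟩) =
      strongDominationNumber (cycleGraph (m + 3)) :=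
    strongDominationNumber_eq_of_iso (contractCycleIso m)
  rw [cycle_sdn (m + 3) (by omega)] at h2
  have h3 : strongDominationNumber (contractEdge (cycleGraph (m + 4)) u v) = (m + 3 + 2) / 3 :=
    h1.trans h2
  omega

/-- For any edge `e = uv` of `C_{3k+1}` (`k ≥ 1`),
`γst(C_{3k+1}/e) = γst(C_{3k+1}) - 1 = k`. -/
theorem strongDominationNumber_cycle_contractEdge (k : ℕ) (hk : 1 ≤ k)
    (u v : Fin (3 * k + 1)) (huv : (SimpleGraph.cycleGraph (3 * k + 1)).Adj u v) :
    strongDominationNumber (contractEdge (SimpleGraph.cycleGraph (3 * k + 1)) u v) =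
      strongDominationNumber (SimpleGraph.cycleGraph (3 * k + 1)) - 1 ∧
    strongDominationNumber (SimpleGraph.cycleGraph (3 * k + 1)) - 1 = k := by
  have hcyc : strongDominationNumber (cycleGraph (3 * k + 1)) = (3 * k + 1 + 2) / 3 :=
    cycle_sdn _ (by omega)
  have hcon : strongDominationNumber (contractEdge (cycleGraph (3 * k + 1)) u v) =
      (3 * k + 1 + 1) / 3 := core (by omega) u v huv
  constructor <;> omega
end
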